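/- arXiv:2012.12717 — 12 statements merged into one kernel-verified Lean document; each statement's English description precedes it below -/
import Mathlib

section
/- Let H = H₁ + H₂ where H₁ and H₂ are self-adjoint operators on a finite-dimensional complex inner product space ℋ = S ⊕ S^⊥ (S a nonzero subspace), H₁ vanishes on S, ⟨x, H₁ x⟩ ≥ J‖x‖² for every x ∈ S^⊥, K := ‖H₂‖ is the operator norm of H₂, and J > 2K. Then λmin(H₂|_S) − K²/(J − 2K) ≤ λmin(H) ≤ λmin(H₂|_S), where λmin(H₂|_S) denotes the minimum of the Rayleigh quotient re⟨x, H₂ x⟩ over unit vectors x ∈ S, and λmin(H) is the smallest eigenvalue of H. -/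
open scoped ComplexInnerProductSpace

/-- The smallest eigenvalue of a self-adjoint operator on a finite-dimensional complex
inner product space, expressed as the infimum of the Rayleigh quotient over unit vectors. -/
noncomputable def lamMin {ℋ : Type*} [NormedAddCommGroup ℋ] [InnerProductSpace ℂ ℋ]
    (A : ℋ →L[ℂ] ℋ) : ℝ :=
  sInf {r : ℝ | ∃ x : ℋ, ‖x‖ = 1 ∧ r = (⟪x, A x⟫).re}

/-- The infimum of the Rayleigh quotient of `A` over unit vectors in the subspace `S`. -/
noncomputable def lamMinOn {ℋ : Type*} [NormedAddCommGroup ℋ] [InnerProductSpace ℂ ℋ]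
    (A : ℋ →L[ℂ] ℋ) (S : Submodule ℂ ℋ) : ℝ :=
  sInf {r : ℝ | ∃ x : ℋ, x ∈ S ∧ ‖x‖ = 1 ∧ r = (⟪x, A x⟫).re}

set_option maxHeartbeats 1000000 in
/-- Extended Projection Lemma, ground state energy bound:
`λmin(H₂|_S) − K²/(J − 2K) ≤ λmin(H₁ + H₂) ≤ λmin(H₂|_S)`. -/
theorem extended_projection_lemma_energy_bound
    {ℋ : Type*} [NormedAddCommGroup ℋ] [InnerProductSpace ℂ ℋ] [FiniteDimensional ℂ ℋ]
    (H₁ H₂ : ℋ →L[ℂ] ℋ) (hH₁ : IsSelfAdjoint H₁) (hH₂ : IsSelfAdjoint H₂)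
    (S : Submodule ℂ ℋ) (hS : S ≠ ⊥)
    (hvanish : ∀ x ∈ S, H₁ x = 0)
    (J : ℝ) (hgap : ∀ x ∈ Sᗮ, J * ‖x‖ ^ 2 ≤ (⟪x, H₁ x⟫).re)
    (K : ℝ) (hK : K = ‖H₂‖) (hJK : 2 * K < J) :
    lamMinOn H₂ S - K ^ 2 / (J - 2 * K) ≤ lamMin (H₁ + H₂) ∧
      lamMin (H₁ + H₂) ≤ lamMinOn H₂ S := by
  have hK0 : 0 ≤ K := hK ▸ norm_nonneg _
  -- a unit vector in S
  obtain ⟨x₁, hx₁S, hx₁⟩ := Submodule.exists_mem_ne_zero_of_ne_bot hS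
  set x₀ : ℋ := (‖x₁‖ : ℂ)⁻¹ • x₁ with hx₀def
  have hx₀S : x₀ ∈ S := S.smul_mem _ hx₁S
  have hx₀ : ‖x₀‖ = 1 := norm_smul_inv_norm (𝕜 := ℂ) hx₁
  -- Rayleigh quotient bound
  have rayleigh_abs : ∀ (A : ℋ →L[ℂ] ℋ) (x : ℋ), ‖x‖ = 1 → |(⟪x, A x⟫).re| ≤ ‖A‖ := by
    intro A x hx
    calc |(⟪x, A x⟫).re| ≤ ‖(⟪x, A x⟫ : ℂ)‖ := by
            exact Complex.abs_re_le_norm _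
      _ ≤ ‖x‖ * ‖A x‖ := norm_inner_le_norm _ _
      _ ≤ ‖x‖ * (‖A‖ * ‖x‖) := by gcongr; exact A.le_opNorm x
      _ = ‖A‖ := by rw [hx]; ring
  -- the two sets
  set big := {r : ℝ | ∃ x : ℋ, ‖x‖ = 1 ∧ r = (⟪x, (H₁ + H₂) x⟫).re} with hbig
  set small := {r : ℝ | ∃ x : ℋ, x ∈ S ∧ ‖x‖ = 1 ∧ r = (⟪x, H₂ x⟫).re} with hsmall
  have big_ne : big.Nonempty := ⟨_, x₀, hx₀, rfl⟩
  have small_ne : small.Nonempty := ⟨_, x₀, hx₀S, hx₀, rfl⟩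
  have big_bdd : BddBelow big := by
    refine ⟨-‖H₁ + H₂‖, ?_⟩
    rintro r ⟨x, hx, rfl⟩
    have := rayleigh_abs (H₁ + H₂) x hx
    have := neg_abs_le ((⟪x, (H₁ + H₂) x⟫ : ℂ).re)
    linarith
  have small_bdd : BddBelow small := by
    refine ⟨-K, ?_⟩
    rintro r ⟨x, hxS, hx, rfl⟩
    have := rayleigh_abs H₂ x hx
    have := neg_abs_le ((⟪x, H₂ x⟫ : ℂ).re)
    rw [hK]; linarith
  set μ := lamMinOn H₂ S with hμ
  have hμ' : μ = sInf small := rfl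
  have hμK : μ ≤ K := by
    have h1 : μ ≤ (⟪x₀, H₂ x₀⟫).re := by
      rw [hμ']; exact csInf_le small_bdd ⟨x₀, hx₀S, hx₀, rfl⟩
    have h2 := rayleigh_abs H₂ x₀ hx₀
    have h3 := le_abs_self ((⟪x₀, H₂ x₀⟫ : ℂ).re)
    rw [hK]; linarith
  -- key per-vector lower bound
  have key : ∀ x : ℋ, ‖x‖ = 1 → μ - K ^ 2 / (J - 2 * K) ≤ (⟪x, (H₁ + H₂) x⟫).re := by
    intro x hx
    obtain ⟨u, hu, v, hv, rfl⟩ := Submodule.exists_add_mem_mem_orthogonal (K := S) x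
    have huv : ⟪u, v⟫ = 0 := Submodule.inner_right_of_mem_orthogonal hu hv
    have hsum : ‖u‖ ^ 2 + ‖v‖ ^ 2 = 1 := by
      have h := @norm_add_sq ℂ ℋ _ _ _ u v
      rw [huv, hx] at h
      simpa using h.symm
    have hH₁u : H₁ u = 0 := hvanish u hu
    have e₁ : (⟪u + v, H₁ (u + v)⟫).re = (⟪v, H₁ v⟫).re := by
      have huH₁v : ⟪u, H₁ v⟫ = 0 := by
        have hsymm1 : ⟪H₁ u, v⟫ = ⟪u, H₁ v⟫ := hH₁.isSymmetric u v
        rw [← hsymm1, hH₁u, inner_zero_left]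
      rw [map_add, hH₁u, zero_add, inner_add_left, huH₁v]
      simp
    have e₂ : (⟪u + v, H₂ (u + v)⟫).re
        = (⟪u, H₂ u⟫).re + 2 * (⟪u, H₂ v⟫).re + (⟪v, H₂ v⟫).re := by
      have hsym : (⟪v, H₂ u⟫).re = (⟪u, H₂ v⟫).re := by
        have hsymm2 : ⟪H₂ v, u⟫ = ⟪v, H₂ u⟫ := hH₂.isSymmetric v u
        rw [← hsymm2, ← inner_conj_symm u (H₂ v), Complex.conj_re]
      rw [map_add, inner_add_left, inner_add_right, inner_add_right]
      simp only [Complex.add_re, hsym]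
      ring
    have etot : (⟪u + v, (H₁ + H₂) (u + v)⟫).re
        = (⟪v, H₁ v⟫).re + ((⟪u, H₂ u⟫).re + 2 * (⟪u, H₂ v⟫).re + (⟪v, H₂ v⟫).re) := by
      rw [ContinuousLinearMap.add_apply, inner_add_right, Complex.add_re, e₁, e₂]
    -- bound ⟪u, H₂ u⟫
    have hmuu : μ * ‖u‖ ^ 2 ≤ (⟪u, H₂ u⟫).re := by
      rcases eq_or_ne u 0 with h | h
      · simp [h]
      · have hw : ‖(‖u‖ : ℂ)⁻¹ • u‖ = 1 := norm_smul_inv_norm (𝕜 := ℂ) h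
        set w : ℋ := (‖u‖ : ℂ)⁻¹ • u with hwdef
        have hwS : w ∈ S := S.smul_mem _ hu
        have h1 : μ ≤ (⟪w, H₂ w⟫).re := by
          rw [hμ']; exact csInf_le small_bdd ⟨w, hwS, hw, rfl⟩
        have h2 : ⟪w, H₂ w⟫ = (((‖u‖ ^ 2)⁻¹ : ℝ) : ℂ) * ⟪u, H₂ u⟫ := by
          rw [hwdef, map_smul, inner_smul_left, inner_smul_right]
          rw [map_inv₀, Complex.conj_ofReal]
          push_cast
          ring
        have h3 : (⟪w, H₂ w⟫).re = (‖u‖ ^ 2)⁻¹ * (⟪u, H₂ u⟫).re := by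
          rw [h2, Complex.re_ofReal_mul]
        have ha : (0 : ℝ) < ‖u‖ ^ 2 := pow_pos (norm_pos_iff.2 h) 2
        rw [h3] at h1
        have h4 := mul_le_mul_of_nonneg_right h1 ha.le
        rwa [inv_mul_eq_div, div_mul_cancel₀ _ ha.ne'] at h4
    -- bound cross term
    have hcross : -(K * ‖u‖ * ‖v‖) ≤ (⟪u, H₂ v⟫).re := by
      have habs : |(⟪u, H₂ v⟫ : ℂ).re| ≤ K * ‖u‖ * ‖v‖ := by
        calc |(⟪u, H₂ v⟫ : ℂ).re| ≤ ‖(⟪u, H₂ v⟫ : ℂ)‖ := by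
              exact Complex.abs_re_le_norm _
          _ ≤ ‖u‖ * ‖H₂ v‖ := norm_inner_le_norm _ _
          _ ≤ ‖u‖ * (‖H₂‖ * ‖v‖) := by gcongr; exact H₂.le_opNorm v
          _ = K * ‖u‖ * ‖v‖ := by rw [hK]; ring
      have := neg_abs_le ((⟪u, H₂ v⟫ : ℂ).re)
      linarith
    -- bound ⟪v, H₂ v⟫
    have hvv : -(K * ‖v‖ ^ 2) ≤ (⟪v, H₂ v⟫).re := by
      have habs : |(⟪v, H₂ v⟫ : ℂ).re| ≤ K * ‖v‖ ^ 2 := by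
        calc |(⟪v, H₂ v⟫ : ℂ).re| ≤ ‖(⟪v, H₂ v⟫ : ℂ)‖ := by
              exact Complex.abs_re_le_norm _
          _ ≤ ‖v‖ * ‖H₂ v‖ := norm_inner_le_norm _ _
          _ ≤ ‖v‖ * (‖H₂‖ * ‖v‖) := by gcongr; exact H₂.le_opNorm v
          _ = K * ‖v‖ ^ 2 := by rw [hK]; ring
      have := neg_abs_le ((⟪v, H₂ v⟫ : ℂ).re)
      linarith
    have hgapv : J * ‖v‖ ^ 2 ≤ (⟪v, H₁ v⟫).re := hgap v hv
    -- arithmetic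
    rw [etot]
    set a := ‖u‖ with hadef
    set b := ‖v‖ with hbdef
    have ha0 : 0 ≤ a := norm_nonneg _
    have hb0 : 0 ≤ b := norm_nonneg _
    have ha1 : a ≤ 1 := by nlinarith
    have hc : 0 < J - K - μ := by linarith
    have hd : 0 < J - 2 * K := by linarith
    have ha2 : a ^ 2 = 1 - b ^ 2 := by linarith
    have s1 : μ - 2 * K * b + (J - K - μ) * b ^ 2
        ≤ μ * a ^ 2 - 2 * (K * a * b) + (J - K) * b ^ 2 := by
      rw [ha2]
      nlinarith [mul_nonneg (mul_nonneg hK0 hb0) (by linarith : (0 : ℝ) ≤ 1 - a)]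
    have s2 : -(K ^ 2) / (J - K - μ) ≤ (J - K - μ) * b ^ 2 - 2 * K * b := by
      rw [div_le_iff₀ hc]
      nlinarith [sq_nonneg ((J - K - μ) * b - K)]
    have s3 : K ^ 2 / (J - K - μ) ≤ K ^ 2 / (J - 2 * K) := by
      exact div_le_div_of_nonneg_left (by positivity) hd (by linarith)
    have hnd : -(K ^ 2) / (J - K - μ) = -(K ^ 2 / (J - K - μ)) := neg_div _ _
    linarith
  constructor
  · -- lower bound
    have : μ - K ^ 2 / (J - 2 * K) ≤ sInf big := by
      apply le_csInf big_ne
      rintro r ⟨x, hx, rfl⟩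
      exact key x hx
    exact this
  · -- upper bound
    have hsub : small ⊆ big := by
      rintro r ⟨x, hxS, hx, rfl⟩
      refine ⟨x, hx, ?_⟩
      rw [ContinuousLinearMap.add_apply, hvanish x hxS, zero_add]
    exact csInf_le_csInf big_bdd small_ne hsub
end

section
/- Let H = H₁ + H₂ where H₁ and H₂ are self-adjoint operators on a finite-dimensional complex inner product space ℋ = S ⊕ S^⊥ (S a nonzero subspace), H₁ vanishes on S, ⟨x, H₁ x⟩ ≥ J‖x‖² for every x ∈ S^⊥, K := ‖H₂‖, and J > 2K. Then for any δ ≥ 0 and any unit vector ψ with ⟨ψ, H ψ⟩ ≤ λmin(H) + δ, there exists a unit vector ψ' ∈ S such that |⟨ψ, ψ'⟩|² ≥ 1 − ((K + √(K² + δ(J − 2K))) / (J − 2K))². -/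
set_option maxHeartbeats 1000000
open scoped ComplexInnerProductSpace

lemma re_inner_apply_le {ℋ : Type*} [NormedAddCommGroup ℋ] [InnerProductSpace ℂ ℋ]
    (A : ℋ →L[ℂ] ℋ) (x y : ℋ) : |(⟪x, A y⟫).re| ≤ ‖A‖ * ‖x‖ * ‖y‖ := by
  calc |(⟪x, A y⟫).re| ≤ ‖⟪x, A y⟫‖ := Complex.abs_re_le_norm _
    _ ≤ ‖x‖ * ‖A y‖ := norm_inner_le_norm _ _
    _ ≤ ‖x‖ * (‖A‖ * ‖y‖) := by gcongr; exact A.le_opNorm y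
    _ = ‖A‖ * ‖x‖ * ‖y‖ := by ring

lemma lamMin_le_unit {ℋ : Type*} [NormedAddCommGroup ℋ] [InnerProductSpace ℂ ℋ]
    (A : ℋ →L[ℂ] ℋ) (x : ℋ) (hx : ‖x‖ = 1) : lamMin A ≤ (⟪x, A x⟫).re := by
  apply csInf_le
  · refine ⟨-‖A‖, ?_⟩
    rintro r ⟨y, hy, rfl⟩
    have h := abs_le.1 (re_inner_apply_le A y y)
    rw [hy] at h
    linarith [h.1]
  · exact ⟨x, hx, rfl⟩

lemma quad_root_bound {a K δ t s : ℝ} (ha : 0 < a) (hK0 : 0 ≤ K) (ht0 : 0 ≤ t)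
    (hs0 : 0 ≤ s) (hsK : K ≤ s) (hs2 : s ^ 2 = K ^ 2 + δ * a)
    (key : a * t ^ 2 ≤ 2 * K * t + δ) : t ^ 2 ≤ ((K + s) / a) ^ 2 := by
  have hx : 0 ≤ a * t := mul_nonneg ha.le ht0
  have hfac : (a * t - (K + s)) * (a * t + (s - K)) ≤ 0 := by
    nlinarith [mul_le_mul_of_nonneg_left key ha.le]
  have hat : a * t ≤ K + s := by
    by_contra h
    push_neg at h
    have h1 : 0 < a * t - (K + s) := by linarith
    have h2 : 0 < a * t + (s - K) := by linarith
    nlinarith [mul_pos h1 h2]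
  rw [div_pow, le_div_iff₀ (by positivity)]
  nlinarith [mul_self_le_mul_self hx hat]

/-- Extended Projection Lemma, ground state deviation bound: any low-energy state of
`H = H₁ + H₂` is close to a state in `S`. -/
theorem extended_projection_lemma_deviation_bound
    {ℋ : Type*} [NormedAddCommGroup ℋ] [InnerProductSpace ℂ ℋ] [FiniteDimensional ℂ ℋ]
    (H₁ H₂ : ℋ →L[ℂ] ℋ) (hH₁ : IsSelfAdjoint H₁) (hH₂ : IsSelfAdjoint H₂)
    (S : Submodule ℂ ℋ) (hS : S ≠ ⊥)
    (hvanish : ∀ x ∈ S, H₁ x = 0)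
    (J : ℝ) (hgap : ∀ x ∈ Sᗮ, J * ‖x‖ ^ 2 ≤ (⟪x, H₁ x⟫).re)
    (K : ℝ) (hK : K = ‖H₂‖) (hJK : 2 * K < J)
    (δ : ℝ) (hδ : 0 ≤ δ)
    (ψ : ℋ) (hψ : ‖ψ‖ = 1)
    (hlow : (⟪ψ, (H₁ + H₂) ψ⟫).re ≤ lamMin (H₁ + H₂) + δ) :
    ∃ ψ' ∈ S, ‖ψ'‖ = 1 ∧
      1 - ((K + Real.sqrt (K ^ 2 + δ * (J - 2 * K))) / (J - 2 * K)) ^ 2 ≤ ‖⟪ψ, ψ'⟫‖ ^ 2 := by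
  have hK0 : 0 ≤ K := hK ▸ norm_nonneg H₂
  set a : ℝ := J - 2 * K with ha_def
  have ha : 0 < a := by simp only [ha_def]; linarith
  set s : ℝ := Real.sqrt (K ^ 2 + δ * a) with hs_def
  have hs0 : 0 ≤ s := Real.sqrt_nonneg _
  have hs2 : s ^ 2 = K ^ 2 + δ * a := Real.sq_sqrt (by positivity)
  have hsK : K ≤ s := by nlinarith [mul_nonneg hδ ha.le]
  -- a unit vector in S
  obtain ⟨v, hvS, hv0⟩ := (Submodule.ne_bot_iff S).mp hS
  have hvn : (0:ℝ) < ‖v‖ := norm_pos_iff.mpr hv0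
  set e : ℋ := (‖v‖⁻¹ : ℂ) • v with he_def
  have heS : e ∈ S := S.smul_mem _ hvS
  have he1 : ‖e‖ = 1 := by
    rw [he_def, norm_smul]
    simp [hvn.ne']
  -- symmetric forms
  have hsym₁ : ∀ x y : ℋ, ⟪H₁ x, y⟫ = ⟪x, H₁ y⟫ := fun x y => hH₁.isSymmetric x y
  have hsym₂ : ∀ x y : ℋ, ⟪H₂ x, y⟫ = ⟪x, H₂ y⟫ := fun x y => hH₂.isSymmetric x y
  -- decomposition
  set p : ℋ := (S.orthogonalProjectionOnto ψ : ℋ) with hp_def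
  have hpS : p ∈ S := (S.orthogonalProjectionOnto ψ).2
  set q : ℋ := ψ - p with hq_def
  have hqS : q ∈ Sᗮ := Submodule.sub_starProjection_mem_orthogonal (K := S) ψ
  have hψpq : ψ = p + q := by rw [hq_def]; abel
  have hpq0 : ⟪p, q⟫ = 0 := Submodule.inner_right_of_mem_orthogonal hpS hqS
  have hqp0 : ⟪q, p⟫ = 0 := Submodule.inner_left_of_mem_orthogonal hpS hqS
  set t : ℝ := ‖q‖ with ht_def
  set u : ℝ := ‖p‖ with hu_def
  have ht0 : 0 ≤ t := norm_nonneg _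
  have hu0 : 0 ≤ u := norm_nonneg _
  have hut : u ^ 2 + t ^ 2 = 1 := by
    have := norm_add_sq_eq_norm_sq_add_norm_sq_of_inner_eq_zero p q hpq0
    rw [← hψpq] at this
    rw [hψ] at this
    nlinarith [this]
  have ht1 : t ≤ 1 := by nlinarith
  have hu1 : u ≤ 1 := by nlinarith
  -- H₁ part
  have hH1ψ : (⟪ψ, H₁ ψ⟫).re = (⟪q, H₁ q⟫).re := by
    rw [hψpq]
    rw [map_add, hvanish p hpS, zero_add, inner_add_left]
    have : ⟪p, H₁ q⟫ = 0 := by rw [← hsym₁, hvanish p hpS, inner_zero_left]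
    rw [this, zero_add]
  have hE1 : J * t ^ 2 ≤ (⟪ψ, H₁ ψ⟫).re := by rw [hH1ψ]; exact hgap q hqS
  -- H₂ part
  have hH2ψ : (⟪ψ, H₂ ψ⟫).re
      = (⟪p, H₂ p⟫).re + 2 * (⟪p, H₂ q⟫).re + (⟪q, H₂ q⟫).re := by
    rw [hψpq, map_add, inner_add_left, inner_add_right, inner_add_right]
    have hqp : (⟪q, H₂ p⟫).re = (⟪p, H₂ q⟫).re := by
      have h1 : ⟪H₂ q, p⟫ = starRingEnd ℂ ⟪p, H₂ q⟫ := (inner_conj_symm _ _).symm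
      rw [← hsym₂ q p, h1, Complex.conj_re]
    simp only [Complex.add_re]
    rw [hqp]; ring
  have hcross : |(⟪p, H₂ q⟫).re| ≤ K * (u * t) := by
    have := re_inner_apply_le H₂ p q
    rw [← hK] at this
    calc |(⟪p, H₂ q⟫).re| ≤ K * ‖p‖ * ‖q‖ := this
      _ = K * (u * t) := by ring
  have hqq : |(⟪q, H₂ q⟫).re| ≤ K * t ^ 2 := by
    have := re_inner_apply_le H₂ q q
    rw [← hK] at this
    calc |(⟪q, H₂ q⟫).re| ≤ K * ‖q‖ * ‖q‖ := this
      _ = K * t ^ 2 := by ring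
  have hpp : |(⟪p, H₂ p⟫).re| ≤ K * u ^ 2 := by
    have := re_inner_apply_le H₂ p p
    rw [← hK] at this
    calc |(⟪p, H₂ p⟫).re| ≤ K * ‖p‖ * ‖p‖ := this
      _ = K * u ^ 2 := by ring
  have hsplit : (⟪ψ, (H₁ + H₂) ψ⟫).re = (⟪ψ, H₁ ψ⟫).re + (⟪ψ, H₂ ψ⟫).re := by
    rw [ContinuousLinearMap.add_apply, inner_add_right, Complex.add_re]
  -- key quadratic inequality
  have key : a * t ^ 2 ≤ 2 * K * t + δ := by
    by_cases hp0 : p = 0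
    · have hu' : u = 0 := by rw [hu_def, hp0, norm_zero]
      have ht2 : t ^ 2 = 1 := by nlinarith
      have hle : lamMin (H₁ + H₂) ≤ K := by
        have h1 : (⟪e, (H₁ + H₂) e⟫).re = (⟪e, H₂ e⟫).re := by
          rw [ContinuousLinearMap.add_apply, inner_add_right, Complex.add_re,
            hvanish e heS, inner_zero_right]
          simp
        have h2 := lamMin_le_unit (H₁ + H₂) e he1
        have h3 := (abs_le.1 (re_inner_apply_le H₂ e e)).2
        rw [he1] at h3
        rw [h1] at h2
        calc lamMin (H₁ + H₂) ≤ (⟪e, H₂ e⟫).re := h2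
          _ ≤ K := by rw [hK]; nlinarith [h3]
      have h4 : J - K ≤ (⟪ψ, (H₁ + H₂) ψ⟫).re := by
        rw [hsplit, hH2ψ]
        have c1 := (abs_le.1 hcross).1
        have c2 := (abs_le.1 hqq).1
        have c3 := (abs_le.1 hpp).1
        have e1 : K * (u * t) = 0 := by rw [hu']; ring
        have e2 : K * u ^ 2 = 0 := by rw [hu']; ring
        have e3 : K * t ^ 2 = K := by rw [ht2]; ring
        have e4 : J * t ^ 2 = J := by rw [ht2]; ring
        linarith [hE1]
      have h5 : a ≤ δ := by
        have := hlow
        simp only [ha_def]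
        linarith
      nlinarith [mul_nonneg hK0 ht0, ht2]
    · have hu' : (0:ℝ) < u := by rw [hu_def]; exact norm_pos_iff.mpr hp0
      set c : ℝ := (⟪p, H₂ p⟫).re with hc_def
      have hlam : lamMin (H₁ + H₂) ≤ u⁻¹ * u⁻¹ * c := by
        have hmem : (u⁻¹ : ℂ) • p ∈ S := S.smul_mem _ hpS
        have hn1 : ‖(u⁻¹ : ℂ) • p‖ = 1 := by
          rw [norm_smul, ← hu_def]
          simp [abs_of_pos hu']
          exact inv_mul_cancel₀ hu'.ne'
        have h2 := lamMin_le_unit (H₁ + H₂) _ hn1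
        have h1 : (⟪(u⁻¹ : ℂ) • p, (H₁ + H₂) ((u⁻¹ : ℂ) • p)⟫).re
            = u⁻¹ * u⁻¹ * c := by
          rw [ContinuousLinearMap.add_apply, inner_add_right, Complex.add_re,
            hvanish _ hmem, inner_zero_right]
          rw [map_smul, inner_smul_left, inner_smul_right]
          rw [map_inv₀, Complex.conj_ofReal]
          rw [← mul_assoc, ← Complex.ofReal_inv, ← Complex.ofReal_mul,
            Complex.re_ofReal_mul]
          simp [hc_def]
        rw [h1] at h2
        exact h2
      have hcu : c ≤ K * u ^ 2 := (abs_le.1 hpp).2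
      have h7 : u⁻¹ * u⁻¹ * c ≤ c + K * t ^ 2 := by
        have heq : u⁻¹ * u⁻¹ * c = c / (u * u) := by
          rw [div_eq_mul_inv, mul_inv]; ring
        rw [heq, div_le_iff₀ (by positivity)]
        have hcut : c * (u ^ 2 + t ^ 2) = c := by rw [hut]; ring
        nlinarith [mul_le_mul_of_nonneg_right hcu (sq_nonneg t), hcut]
      have hlower : J * t ^ 2 + c - 2 * K * (u * t) - K * t ^ 2
          ≤ (⟪ψ, (H₁ + H₂) ψ⟫).re := by
        rw [hsplit, hH2ψ]
        have c1 := (abs_le.1 hcross).1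
        have c2 := (abs_le.1 hqq).1
        linarith [hE1]
      have h8 : J * t ^ 2 - 2 * K * (u * t) - K * t ^ 2 ≤ K * t ^ 2 + δ := by
        linarith [hlow, hlam, h7, hlower]
      have h9 : K * (u * t) ≤ K * t := by
        have : u * t ≤ 1 * t := mul_le_mul_of_nonneg_right hu1 ht0
        nlinarith
      simp only [ha_def]
      linarith
  -- final bound: t² ≤ ((K+s)/a)²
  have hB2 : t ^ 2 ≤ ((K + s) / a) ^ 2 := quad_root_bound ha hK0 ht0 hs0 hsK hs2 key
  by_cases hp0 : p = 0
  · refine ⟨e, heS, he1, ?_⟩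
    have hu' : u = 0 := by rw [hu_def, hp0, norm_zero]
    have hu2 : u ^ 2 = 0 := by rw [hu']; ring
    have : t ^ 2 = 1 := by linarith
    have h1B : (1:ℝ) ≤ ((K + s) / a) ^ 2 := by
      calc (1:ℝ) = t ^ 2 := this.symm
        _ ≤ _ := hB2
    have := sq_nonneg ‖⟪ψ, e⟫‖
    linarith
  · have hu' : 0 < u := by
      rw [hu_def]; exact norm_pos_iff.mpr hp0
    refine ⟨(u⁻¹ : ℂ) • p, S.smul_mem _ hpS, ?_, ?_⟩
    · rw [norm_smul, ← hu_def]
      simp [abs_of_pos hu']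
      exact inv_mul_cancel₀ hu'.ne'
    · have hinner : ⟪ψ, (u⁻¹ : ℂ) • p⟫ = (u⁻¹ : ℂ) * (u:ℂ) ^ 2 := by
        rw [inner_smul_right, hψpq, inner_add_left, hqp0, add_zero,
          inner_self_eq_norm_sq_to_K]
        norm_num [hu_def]
      have hnorm : ‖⟪ψ, (u⁻¹ : ℂ) • p⟫‖ = u := by
        rw [hinner]
        rw [norm_mul]
        simp [abs_of_nonneg hu0, abs_of_nonneg (inv_nonneg.2 hu0)]
        field_simp
      rw [hnorm]
      linarith [hB2, hut]
end

section
/- Let H = H₁ + H₂ where H₁ and H₂ are self-adjoint operators on a finite-dimensional complex inner product space ℋ = S ⊕ S^⊥ (S a nonzero subspace), H₁ vanishes on S, ⟨x, H₁ x⟩ ≥ J‖x‖² for every x ∈ S^⊥, K := ‖H₂‖, and J > 2K. Then for any δ ≥ 0 and any unit vector ψ with ⟨ψ, H ψ⟩ ≤ λmin(H) + δ, there exists a unit vector ψ' ∈ S such that both |⟨ψ, ψ'⟩|² ≥ 1 − ((K + √(K² + δ(J − 2K))) / (J − 2K))² and ⟨ψ', H ψ'⟩ ≤ λmin(H) + δ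 + 2K · (K + √(K² + δ(J − 2K))) / (J − 2K). -/
open scoped ComplexInnerProductSpace

private lemma epl_energy_aux (m δ K J a b t ε : ℝ) (hK0 : 0 ≤ K) (hc : 0 < J - 2 * K)
    (hnorm : b ^ 2 + a ^ 2 = 1) (ha0 : 0 ≤ a) (hb1 : b ≤ 1) (htK : t ≤ K) (haε : a ≤ ε)
    (hstar : J * a ^ 2 + b ^ 2 * t - 2 * K * (a * b) - K * a ^ 2 ≤ m + δ) :
    t ≤ m + δ + 2 * K * ε := by
  nlinarith [mul_le_mul_of_nonneg_left haε (mul_nonneg (by norm_num : (0:ℝ) ≤ 2) hK0),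
    mul_le_mul_of_nonneg_left hb1 (mul_nonneg (mul_nonneg (by norm_num : (0:ℝ) ≤ 2) hK0) ha0),
    mul_le_mul_of_nonneg_right htK (sq_nonneg a), mul_nonneg hc.le (sq_nonneg a)]

set_option maxHeartbeats 1000000 in
/-- Extended Projection Lemma, deviation bound together with the energy obtained by the
perturbed state against `H = H₁ + H₂`. -/
theorem extended_projection_lemma_full
    {ℋ : Type*} [NormedAddCommGroup ℋ] [InnerProductSpace ℂ ℋ] [FiniteDimensional ℂ ℋ]
    (H₁ H₂ : ℋ →L[ℂ] ℋ) (hH₁ : IsSelfAdjoint H₁) (hH₂ : IsSelfAdjoint H₂)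
    (S : Submodule ℂ ℋ) (hS : S ≠ ⊥)
    (hvanish : ∀ x ∈ S, H₁ x = 0)
    (J : ℝ) (hgap : ∀ x ∈ Sᗮ, J * ‖x‖ ^ 2 ≤ (⟪x, H₁ x⟫).re)
    (K : ℝ) (hK : K = ‖H₂‖) (hJK : 2 * K < J)
    (δ : ℝ) (hδ : 0 ≤ δ)
    (ψ : ℋ) (hψ : ‖ψ‖ = 1)
    (hlow : (⟪ψ, (H₁ + H₂) ψ⟫).re ≤ lamMin (H₁ + H₂) + δ) :
    ∃ ψ' ∈ S, ‖ψ'‖ = 1 ∧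
      1 - ((K + Real.sqrt (K ^ 2 + δ * (J - 2 * K))) / (J - 2 * K)) ^ 2 ≤ ‖⟪ψ, ψ'⟫‖ ^ 2 ∧
      (⟪ψ', (H₁ + H₂) ψ'⟫).re ≤
        lamMin (H₁ + H₂) + δ + 2 * K * (K + Real.sqrt (K ^ 2 + δ * (J - 2 * K))) / (J - 2 * K) := by
  classical
  have hK0 : 0 ≤ K := hK ▸ norm_nonneg _
  have hc : (0:ℝ) < J - 2 * K := by linarith
  have hJ0 : (0:ℝ) < J := by linarith
  set s := Real.sqrt (K ^ 2 + δ * (J - 2 * K)) with hs_def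
  have hs0 : 0 ≤ s := Real.sqrt_nonneg _
  have hs2 : s ^ 2 = K ^ 2 + δ * (J - 2 * K) := Real.sq_sqrt (by positivity)
  set ε := (K + s) / (J - 2 * K) with hε_def
  have hε0 : 0 ≤ ε := by positivity
  clear_value s ε
  -- bound on H₂ pairings
  have hH2bd : ∀ x y : ℋ, |(⟪x, H₂ y⟫).re| ≤ K * (‖x‖ * ‖y‖) := by
    intro x y
    calc |(⟪x, H₂ y⟫).re| ≤ ‖⟪x, H₂ y⟫‖ := Complex.abs_re_le_norm _
    _ ≤ ‖x‖ * ‖H₂ y‖ := norm_inner_le_norm _ _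
    _ ≤ ‖x‖ * (‖H₂‖ * ‖y‖) := mul_le_mul_of_nonneg_left (H₂.le_opNorm y) (norm_nonneg x)
    _ = K * (‖x‖ * ‖y‖) := by rw [hK]; ring
  -- splitting of H₁ pairings
  have hsplit : ∀ p q : ℋ, p ∈ S → q ∈ Sᗮ → ⟪p + q, H₁ (p + q)⟫ = ⟪q, H₁ q⟫ := by
    intro p q hp hq
    rw [map_add, hvanish p hp, zero_add, inner_add_left]
    have hpq : ⟪p, H₁ q⟫ = 0 := by
      have h := hH₁.isSymmetric p q
      simp only [ContinuousLinearMap.coe_coe] at h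
      rw [← h, hvanish p hp, inner_zero_left]
    rw [hpq, zero_add]
  -- H₁ is positive semidefinite
  have hH1pos : ∀ x : ℋ, 0 ≤ (⟪x, H₁ x⟫).re := by
    intro x
    have hp : (S.orthogonalProjectionOnto x : ℋ) ∈ S := SetLike.coe_mem _
    have hq : x - (S.orthogonalProjectionOnto x : ℋ) ∈ Sᗮ :=
      S.sub_starProjection_mem_orthogonal x
    have hx : x = (S.orthogonalProjectionOnto x : ℋ) + (x - (S.orthogonalProjectionOnto x : ℋ)) := by abel
    have := hgap _ hq
    calc (0:ℝ) ≤ J * ‖x - (S.orthogonalProjectionOnto x : ℋ)‖ ^ 2 := by positivity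
    _ ≤ (⟪x - (S.orthogonalProjectionOnto x : ℋ), H₁ (x - (S.orthogonalProjectionOnto x : ℋ))⟫).re := this
    _ = (⟪x, H₁ x⟫).re := by rw [← hsplit _ _ hp hq, ← hx]
  -- expansion of the quadratic form of the sum
  have hsum : ∀ x : ℋ, (⟪x, (H₁ + H₂) x⟫).re = (⟪x, H₁ x⟫).re + (⟪x, H₂ x⟫).re := by
    intro x
    rw [ContinuousLinearMap.add_apply, inner_add_right, Complex.add_re]
  -- lower bound on all Rayleigh quotients
  have hlb : ∀ r ∈ {r : ℝ | ∃ x : ℋ, ‖x‖ = 1 ∧ r = (⟪x, (H₁ + H₂) x⟫).re}, -K ≤ r := by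
    rintro r ⟨x, hx1, rfl⟩
    have h1 := hH1pos x
    have h2 := abs_le.mp (hH2bd x x)
    rw [hx1] at h2
    rw [hsum x]
    nlinarith [h2.1]
  have hbdd : BddBelow {r : ℝ | ∃ x : ℋ, ‖x‖ = 1 ∧ r = (⟪x, (H₁ + H₂) x⟫).re} := ⟨-K, hlb⟩
  have hle : ∀ x : ℋ, ‖x‖ = 1 → lamMin (H₁ + H₂) ≤ (⟪x, (H₁ + H₂) x⟫).re := fun x hx =>
    csInf_le hbdd ⟨x, hx, rfl⟩
  -- a unit vector in S
  obtain ⟨x₀, hx₀S, hx₀⟩ := Submodule.exists_mem_ne_zero_of_ne_bot hS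
  have hx₀n : ‖x₀‖ ≠ 0 := norm_ne_zero_iff.mpr hx₀
  set e₀ : ℋ := ((‖x₀‖⁻¹ : ℝ) : ℂ) • x₀ with he₀_def
  have he₀S : e₀ ∈ S := S.smul_mem _ hx₀S
  have he₀1 : ‖e₀‖ = 1 := by
    rw [he₀_def, norm_smul, Complex.norm_real, Real.norm_eq_abs,
      abs_of_nonneg (inv_nonneg.mpr (norm_nonneg x₀))]
    field_simp
  clear_value e₀
  have hmlb : -K ≤ lamMin (H₁ + H₂) := le_csInf ⟨_, e₀, he₀1, rfl⟩ hlb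
  -- unit vectors in S have energy at most K
  have hSen : ∀ x ∈ S, ‖x‖ = 1 → (⟪x, (H₁ + H₂) x⟫).re ≤ K := by
    intro x hx hx1
    have h2 := abs_le.mp (hH2bd x x)
    rw [hx1] at h2
    have : (H₁ + H₂) x = H₂ x := by
      rw [ContinuousLinearMap.add_apply, hvanish x hx, zero_add]
    rw [this]
    nlinarith [h2.2]
  have hmK : lamMin (H₁ + H₂) ≤ K := (hle e₀ he₀1).trans (hSen e₀ he₀S he₀1)
  set m := lamMin (H₁ + H₂) with hm_def
  clear_value m
  -- decomposition of ψ
  set p : ℋ := (S.orthogonalProjectionOnto ψ : ℋ) with hp_def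
  have hpS : p ∈ S := SetLike.coe_mem _
  have hqS : ψ - p ∈ Sᗮ := S.sub_starProjection_mem_orthogonal ψ
  set q : ℋ := ψ - p with hq_def
  have hψeq : ψ = p + q := by rw [hq_def]; abel
  have hortho : ⟪p, q⟫ = 0 := Submodule.inner_right_of_mem_orthogonal hpS hqS
  clear_value p q
  set a := ‖q‖ with ha_def
  set b := ‖p‖ with hb_def
  have ha0 : 0 ≤ a := norm_nonneg _
  have hb0 : 0 ≤ b := norm_nonneg _
  clear_value a b
  have hnorm : b ^ 2 + a ^ 2 = 1 := by
    have : ‖p + q‖ ^ 2 = ‖p‖ ^ 2 + ‖q‖ ^ 2 := by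
      rw [@norm_add_sq ℂ]; simp [hortho]
    rw [← hψeq, hψ] at this
    rw [hb_def, ha_def]
    nlinarith [this]
  have hb1 : b ≤ 1 := by nlinarith
  have ha1 : a ≤ 1 := by nlinarith
  -- the key inequality (*)
  have hstar : J * a ^ 2 + (⟪p, H₂ p⟫).re - 2 * K * (a * b) - K * a ^ 2 ≤ m + δ := by
    have h1 : (⟪ψ, H₁ ψ⟫).re = (⟪q, H₁ q⟫).re := by rw [hψeq, hsplit p q hpS hqS]
    have h2 : J * a ^ 2 ≤ (⟪q, H₁ q⟫).re := by rw [ha_def]; exact hgap q hqS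
    have h3 : ⟪ψ, H₂ ψ⟫ = ⟪p, H₂ p⟫ + ⟪p, H₂ q⟫ + ⟪q, H₂ p⟫ + ⟪q, H₂ q⟫ := by
      rw [hψeq, map_add, inner_add_left, inner_add_right, inner_add_right]; ring
    have h4 := abs_le.mp (hH2bd p q)
    have h5 := abs_le.mp (hH2bd q p)
    have h6 := abs_le.mp (hH2bd q q)
    have h7 : (⟪ψ, H₂ ψ⟫).re =
        (⟪p, H₂ p⟫).re + (⟪p, H₂ q⟫).re + (⟪q, H₂ p⟫).re + (⟪q, H₂ q⟫).re := by
      rw [h3]; simp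
    have h8 := hsum ψ
    rw [h1] at h8
    have := hlow
    rw [h8, h7] at this
    simp only [← ha_def, ← hb_def] at h4 h5 h6
    nlinarith [h4.1, h5.1, h6.1]
  -- quadratic bound
  have hquad : ∀ u : ℝ, 0 ≤ u → (J - 2 * K) * u ^ 2 - 2 * K * u ≤ δ → u ≤ ε := by
    intro u hu h
    rw [hε_def, le_div_iff₀ hc]
    nlinarith [mul_le_mul_of_nonneg_left h hc.le, hs2, hs0, sq_nonneg ((J - 2 * K) * u - K - s), sq_nonneg ((J - 2 * K) * u - K + s)]
  -- lower bound of the projected quadratic form by m * b ^ 2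
  have hrepp : m * b ^ 2 ≤ (⟪p, H₂ p⟫).re := by
    by_cases hp0 : p = 0
    · have hb' : b = 0 := by rw [hb_def, hp0, norm_zero]
      simp [hp0, hb']
    · have hbpos : 0 < b := by rw [hb_def]; exact norm_pos_iff.mpr hp0
      set ψ' : ℋ := ((b⁻¹ : ℝ) : ℂ) • p with hψ'_def
      have hψ'S : ψ' ∈ S := S.smul_mem _ hpS
      have hψ'1 : ‖ψ'‖ = 1 := by
        rw [hψ'_def, norm_smul, Complex.norm_real, Real.norm_eq_abs,
          abs_of_nonneg (inv_nonneg.mpr hb0), ← hb_def]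
        field_simp
      have hcalc : (⟪ψ', H₂ ψ'⟫).re = b⁻¹ * b⁻¹ * (⟪p, H₂ p⟫).re := by
        rw [hψ'_def, map_smul, inner_smul_left, inner_smul_right, Complex.conj_ofReal,
          ← mul_assoc, ← Complex.ofReal_mul]
        simp [Complex.mul_re]
      clear_value ψ'
      have hm_le : m ≤ (⟪ψ', H₂ ψ'⟫).re := by
        have h := hle ψ' hψ'1
        have : (H₁ + H₂) ψ' = H₂ ψ' := by
          rw [ContinuousLinearMap.add_apply, hvanish ψ' hψ'S, zero_add]
        rwa [this] at h
      rw [hcalc] at hm_le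
      have := mul_le_mul_of_nonneg_right hm_le (sq_nonneg b)
      calc m * b ^ 2 ≤ b⁻¹ * b⁻¹ * (⟪p, H₂ p⟫).re * b ^ 2 := by linarith
      _ = (⟪p, H₂ p⟫).re * (b⁻¹ * b) * (b⁻¹ * b) := by ring
      _ = (⟪p, H₂ p⟫).re := by rw [inv_mul_cancel₀ hbpos.ne']; ring
  -- bound a ≤ ε
  have haε : a ≤ ε := by
    apply hquad a ha0
    nlinarith [mul_le_mul_of_nonneg_left hb1 (mul_nonneg (mul_nonneg (by norm_num : (0:ℝ) ≤ 2) hK0) ha0),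
      mul_le_mul_of_nonneg_right hmK (sq_nonneg a)]
  have h2Kε : 2 * K * (K + s) / (J - 2 * K) = 2 * K * ε := by
    rw [hε_def]; ring
  by_cases hp0 : p = 0
  · -- ψ entirely in Sᗮ : then ε ≥ 1 and any unit vector of S works
    have hb0' : b = 0 := by rw [hb_def, hp0]; simp
    have ha1' : a = 1 := by nlinarith
    have hε1 : 1 ≤ ε := by rw [← ha1']; exact haε
    refine ⟨e₀, he₀S, he₀1, ?_, ?_⟩
    · nlinarith [norm_nonneg (⟪ψ, e₀⟫), sq_nonneg ‖⟪ψ, e₀⟫‖]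
    · rw [h2Kε]
      have := hSen e₀ he₀S he₀1
      nlinarith [mul_le_mul_of_nonneg_left hε1 (mul_nonneg (by norm_num : (0:ℝ) ≤ 2) hK0)]
  · -- main case : normalize the projection
    have hbpos : 0 < b := by rw [hb_def]; exact norm_pos_iff.mpr hp0
    set ψ' : ℋ := ((b⁻¹ : ℝ) : ℂ) • p with hψ'_def
    have hψ'S : ψ' ∈ S := S.smul_mem _ hpS
    have hψ'1 : ‖ψ'‖ = 1 := by
      rw [hψ'_def, norm_smul, Complex.norm_real, Real.norm_eq_abs,
        abs_of_nonneg (inv_nonneg.mpr hb0), ← hb_def]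
      field_simp
    have hH12ψ' : (H₁ + H₂) ψ' = H₂ ψ' := by
      rw [ContinuousLinearMap.add_apply, hvanish ψ' hψ'S, zero_add]
    set t := (⟪ψ', (H₁ + H₂) ψ'⟫).re with ht_def
    have htK : t ≤ K := hSen ψ' hψ'S hψ'1
    have hmt : m ≤ t := hle ψ' hψ'1
    have hcalc : t = b⁻¹ * b⁻¹ * (⟪p, H₂ p⟫).re := by
      rw [ht_def, hH12ψ', hψ'_def, map_smul, inner_smul_left, inner_smul_right,
        Complex.conj_ofReal, ← mul_assoc, ← Complex.ofReal_mul]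
      simp [Complex.mul_re]
    clear_value ψ' t
    have hppt : (⟪p, H₂ p⟫).re = b ^ 2 * t := by
      rw [hcalc]
      calc (⟪p, H₂ p⟫).re = (⟪p, H₂ p⟫).re * (b⁻¹ * b) * (b⁻¹ * b) := by
            rw [inv_mul_cancel₀ hbpos.ne']; ring
      _ = b ^ 2 * (b⁻¹ * b⁻¹ * (⟪p, H₂ p⟫).re) := by ring
    refine ⟨ψ', hψ'S, hψ'1, ?_, ?_⟩
    · -- overlap bound
      have hqp : ⟪q, p⟫ = 0 := by
        rw [← inner_conj_symm, hortho, map_zero]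
      have hpp : ⟪p, p⟫ = ((b : ℝ) : ℂ) * ((b : ℝ) : ℂ) := by
        rw [inner_self_eq_norm_sq_to_K, ← hb_def, sq]; rfl
      have hinner : ⟪ψ, ψ'⟫ = ((b : ℝ) : ℂ) := by
        rw [hψeq, hψ'_def, inner_add_left, inner_smul_right, inner_smul_right, hqp, hpp,
          mul_zero, add_zero, ← mul_assoc, ← Complex.ofReal_mul,
          inv_mul_cancel₀ hbpos.ne', Complex.ofReal_one, one_mul]
      rw [hinner, Complex.norm_real, Real.norm_eq_abs, abs_of_nonneg hb0]
      nlinarith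
    · -- energy bound
      rw [h2Kε, ← ht_def]
      rw [hppt] at hstar
      exact epl_energy_aux m δ K J a b t ε hK0 hc hnorm ha0 hb1 htK haε hstar
end

section
/- (Traversal Lemma) Let ℋ be a finite-dimensional complex inner product space, and let S, T ⊆ ℋ be mutually orthogonal subspaces with orthogonal projections Π_S, Π_T. Let U₁, …, U_m be unitary operators on ℋ such that for every i ∈ {1,…,m}, every x ∈ S and every y ∈ T, ⟨y, U_i x⟩ = 0. Let v ∈ S and w ∈ T be unit vectors, let 0 ≤ ε < 1/2, and suppose ‖w − U_m ⋯ U₁ v‖ ≤ ε. Define v_i := U_i ⋯ U₁ v for i ∈ {1,…,m} and P := I − Π_S − Π_T. Then there exists i ∈ {1,…,m} such that ⟨v_i, P v_i⟩ ≥ ((1 − ε)/m)². -/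
open scoped ComplexInnerProductSpace

/-- `traj U v i = U_{i-1} ⋯ U_0 v`, the trajectory of `v` under the sequence of operators `U`. -/
noncomputable def traj {ℋ : Type*} [NormedAddCommGroup ℋ] [InnerProductSpace ℂ ℋ]
    (U : ℕ → ℋ →L[ℂ] ℋ) (v : ℋ) : ℕ → ℋ
  | 0 => v
  | k + 1 => U k (traj U v k)

section aux

variable {ℋ : Type*} [NormedAddCommGroup ℋ] [InnerProductSpace ℂ ℋ] [FiniteDimensional ℂ ℋ]

/-- projection of a member of the orthogonal complement is zero, stated for coerced proj -/
lemma projL_zero (T : Submodule ℂ ℋ) (x : ℋ) (h : ∀ y ∈ T, ⟪y, x⟫ = 0) :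
    (T.subtypeL.comp T.orthogonalProjection) x = 0 := by
  have hx : x ∈ Tᗮ := (Submodule.mem_orthogonal T x).2 h
  simp [Submodule.orthogonalProjectionOnto_apply_of_mem_orthogonal hx]

lemma projL_self (T : Submodule ℂ ℋ) (x : ℋ) (h : x ∈ T) :
    (T.subtypeL.comp T.orthogonalProjection) x = x := by
  simpa using congrArg (Submodule.subtype T)
    (Submodule.orthogonalProjectionOnto_mem_subspace_eq_self (⟨x, h⟩ : T))

lemma projL_norm_le (T : Submodule ℂ ℋ) (x : ℋ) :
    ‖(T.subtypeL.comp T.orthogonalProjection) x‖ ≤ ‖x‖ := by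
  simp only [ContinuousLinearMap.comp_apply, Submodule.subtypeL_apply]
  calc ‖(T.orthogonalProjection x : ℋ)‖ = ‖T.orthogonalProjection x‖ := rfl
    _ ≤ ‖T.orthogonalProjection‖ * ‖x‖ := (T.orthogonalProjection).le_opNorm x
    _ ≤ 1 * ‖x‖ := mul_le_mul_of_nonneg_right (Submodule.orthogonalProjectionOnto_norm_le T) (norm_nonneg x)
    _ = ‖x‖ := one_mul _

end aux

/-- Traversal Lemma: if `S ⊥ T`, each `U i` maps `S` into the orthogonal complement of `T`,
`v ∈ S` and `w ∈ T` are unit vectors, and `U_m ⋯ U₁ v` is `ε`-close to `w` with `ε < 1/2`,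
then some intermediate state `v_i = U_i ⋯ U₁ v` has overlap at least `((1−ε)/m)²` with the
orthogonal complement of `S ⊕ T` (measured by the projector `P = I − Π_S − Π_T`). -/
theorem traversal_lemma
    {ℋ : Type*} [NormedAddCommGroup ℋ] [InnerProductSpace ℂ ℋ] [FiniteDimensional ℂ ℋ]
    (S T : Submodule ℂ ℋ) (hST : ∀ x ∈ S, ∀ y ∈ T, ⟪x, y⟫ = 0)
    (m : ℕ) (U : ℕ → ℋ →L[ℂ] ℋ)
    (hU : ∀ i < m, U i ∈ unitary (ℋ →L[ℂ] ℋ))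
    (hblock : ∀ i < m, ∀ x ∈ S, ∀ y ∈ T, ⟪y, U i x⟫ = 0)
    (v w : ℋ) (hv : v ∈ S) (hvn : ‖v‖ = 1) (hw : w ∈ T) (hwn : ‖w‖ = 1)
    (ε : ℝ) (hε0 : 0 ≤ ε) (hε : ε < 1 / 2)
    (hclose : ‖w - traj U v m‖ ≤ ε) :
    ∃ i, 1 ≤ i ∧ i ≤ m ∧
      ((1 - ε) / m) ^ 2 ≤
        (⟪traj U v i,
            traj U v i - (S.subtypeL.comp S.orthogonalProjection) (traj U v i)
              - (T.subtypeL.comp T.orthogonalProjection) (traj U v i)⟫).re := by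
  classical
  set PiS : ℋ →L[ℂ] ℋ := S.subtypeL.comp S.orthogonalProjection with hPiS
  set PiT : ℋ →L[ℂ] ℋ := T.subtypeL.comp T.orthogonalProjection with hPiT
  have hSmem : ∀ x : ℋ, PiS x ∈ S := fun x => (S.orthogonalProjection x).2
  have hTmem : ∀ x : ℋ, PiT x ∈ T := fun x => (T.orthogonalProjection x).2
  have hSsub : ∀ x : ℋ, x - PiS x ∈ Sᗮ := fun x => S.sub_starProjection_mem_orthogonal x
  have hTsub : ∀ x : ℋ, x - PiT x ∈ Tᗮ := fun x => T.sub_starProjection_mem_orthogonal x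
  -- P
  set P : ℋ → ℋ := fun x => x - PiS x - PiT x with hP
  -- ⟪x, P x⟫.re = ‖P x‖ ^ 2
  have hinner : ∀ x : ℋ, (⟪x, P x⟫).re = ‖P x‖ ^ 2 := by
    intro x
    have h1 : ⟪PiS x, P x⟫ = 0 := by
      have e1 : ⟪PiS x, x - PiS x⟫ = 0 :=
        Submodule.inner_right_of_mem_orthogonal (hSmem x) (hSsub x)
      have e2 : ⟪PiS x, PiT x⟫ = 0 := hST _ (hSmem x) _ (hTmem x)
      calc ⟪PiS x, P x⟫ = ⟪PiS x, x - PiS x⟫ - ⟪PiS x, PiT x⟫ := by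
            rw [hP]; simp [inner_sub_right]
        _ = 0 := by rw [e1, e2, sub_zero]
    have h2 : ⟪PiT x, P x⟫ = 0 := by
      have e1 : ⟪PiT x, x - PiT x⟫ = 0 :=
        Submodule.inner_right_of_mem_orthogonal (hTmem x) (hTsub x)
      have e2 : ⟪PiT x, PiS x⟫ = 0 := by
        rw [inner_eq_zero_symm]; exact hST _ (hSmem x) _ (hTmem x)
      calc ⟪PiT x, P x⟫ = ⟪PiT x, x - PiT x⟫ - ⟪PiT x, PiS x⟫ := by
            rw [hP]; simp [inner_sub_right]; ring
        _ = 0 := by rw [e1, e2, sub_zero]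
    have hx : x = PiS x + PiT x + P x := by
      show x = PiS x + PiT x + (x - PiS x - PiT x); abel
    have key : ⟪x, P x⟫ = ⟪P x, P x⟫ := by
      have e : ⟪x, P x⟫ = ⟪PiS x + PiT x + P x, P x⟫ := by rw [← hx]
      rw [e, inner_add_left, inner_add_left, h1, h2]
      ring
    rw [key, inner_self_eq_norm_sq_to_K]
    norm_cast
  -- trajectory T-component growth bound
  set t : ℕ → ℝ := fun k => ‖PiT (traj U v k)‖ with ht
  set p : ℕ → ℝ := fun k => ‖P (traj U v k)‖ with hp
  have hstep : ∀ k < m, t (k + 1) ≤ t k + p k := by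
    intro k hk
    have hx : traj U v (k + 1) = U k (PiS (traj U v k)) + U k (PiT (traj U v k))
        + U k (P (traj U v k)) := by
      rw [show traj U v (k+1) = U k (traj U v k) from rfl]
      rw [← map_add, ← map_add]
      congr 1
      show traj U v k = PiS (traj U v k) + PiT (traj U v k)
        + (traj U v k - PiS (traj U v k) - PiT (traj U v k))
      abel
    have h0 : PiT (U k (PiS (traj U v k))) = 0 :=
      projL_zero T _ (fun y hy => hblock k hk _ (hSmem _) y hy)
    have hUk := hU k hk
    calc t (k + 1) = ‖PiT (U k (PiS (traj U v k))) + PiT (U k (PiT (traj U v k)))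
          + PiT (U k (P (traj U v k)))‖ := by
          rw [ht]; simp only; rw [hx, map_add, map_add]
      _ = ‖PiT (U k (PiT (traj U v k))) + PiT (U k (P (traj U v k)))‖ := by
          rw [h0, zero_add]
      _ ≤ ‖PiT (U k (PiT (traj U v k)))‖ + ‖PiT (U k (P (traj U v k)))‖ := norm_add_le _ _
      _ ≤ ‖U k (PiT (traj U v k))‖ + ‖U k (P (traj U v k))‖ := by
          gcongr <;> exact projL_norm_le T _
      _ = t k + p k := by
          rw [(U k).norm_map_of_mem_unitary hUk, (U k).norm_map_of_mem_unitary hUk]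
  -- t 0 = 0
  have hTv : PiT v = 0 := projL_zero T v (fun y hy => by
    rw [inner_eq_zero_symm]; exact hST v hv y hy)
  have ht0 : t 0 = 0 := by rw [ht]; simp [traj, hTv]
  -- t m ≥ 1 - ε
  have htm : 1 - ε ≤ t m := by
    have h1 : PiT w = w := projL_self T w hw
    have h2 : ‖PiT w - PiT (traj U v m)‖ ≤ ε := by
      rw [← map_sub]
      exact le_trans (projL_norm_le T _) hclose
    have h3 : 1 - ‖PiT (traj U v m)‖ ≤ ε := by
      calc 1 - ‖PiT (traj U v m)‖ = ‖PiT w‖ - ‖PiT (traj U v m)‖ := by rw [h1, hwn]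
        _ ≤ ‖PiT w - PiT (traj U v m)‖ := norm_sub_norm_le _ _
        _ ≤ ε := h2
    rw [ht]
    linarith
  -- m ≠ 0
  have hm : m ≠ 0 := by
    intro h
    subst h
    have : (1 : ℝ) - ε ≤ 0 := by rw [← ht0]; exact htm
    linarith
  have hmpos : 0 < (m : ℝ) := by positivity
  -- sum bound: t n ≤ t 0 + ∑ p k
  have hsum : ∀ n ≤ m, t n ≤ ∑ k ∈ Finset.range n, p k := by
    intro n hn
    induction n with
    | zero => simp [ht0]
    | succ k ih =>
      rw [Finset.sum_range_succ]
      have hk : k < m := Nat.lt_of_succ_le hn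
      have := hstep k hk
      have := ih (le_of_lt hk)
      linarith
  have hsum' : 1 - ε ≤ ∑ k ∈ Finset.range m, p k := le_trans htm (hsum m le_rfl)
  -- pigeonhole
  have hex : ∃ k ∈ Finset.range m, (1 - ε) / m ≤ p k := by
    by_contra hcon
    push_neg at hcon
    have : ∑ k ∈ Finset.range m, p k < ∑ k ∈ Finset.range m, (1 - ε) / m := by
      apply Finset.sum_lt_sum_of_nonempty
      · exact Finset.nonempty_range_iff.2 hm
      · exact fun k hk => hcon k hk
    rw [Finset.sum_const, Finset.card_range, nsmul_eq_mul,
      mul_div_cancel₀ _ (ne_of_gt hmpos)] at this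
    linarith
  obtain ⟨k, hkm, hkp⟩ := hex
  rw [Finset.mem_range] at hkm
  -- k ≥ 1
  have hk1 : 1 ≤ k := by
    by_contra hk0
    push_neg at hk0
    interval_cases k
    have hPv : P (traj U v 0) = 0 := by
      have hSv : PiS v = v := projL_self S v hv
      rw [hP]
      show v - PiS v - PiT v = 0
      rw [hSv, hTv]; abel
    rw [hp] at hkp
    simp only [hPv, norm_zero] at hkp
    have : 0 < (1 - ε) / m := by
      apply div_pos <;> [linarith; exact hmpos]
    linarith
  refine ⟨k, hk1, le_of_lt hkm, ?_⟩
  rw [show (traj U v k - PiS (traj U v k) - PiT (traj U v k)) = P (traj U v k) from rfl]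
  rw [hinner]
  have h0 : 0 ≤ (1 - ε) / m := by
    apply div_nonneg <;> [linarith; linarith]
  calc ((1 - ε) / m) ^ 2 ≤ (p k) ^ 2 := by
        apply pow_le_pow_left₀ h0 hkp
    _ = ‖P (traj U v k)‖ ^ 2 := rfl
end

section
/- For every natural number m ≥ 1 and all natural numbers a, b with a < b and b ≤ m, one has cos(a·√3/(2m))² − cos(b·√3/(2m))² ≥ 3/(8m²). -/
open Real

lemma sqrt3_bounds : 1.7 < Real.sqrt 3 ∧ Real.sqrt 3 < 1.74 := by
  have h : Real.sqrt 3 ^ 2 = 3 := Real.sq_sqrt (by norm_num)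
  have h0 : 0 ≤ Real.sqrt 3 := Real.sqrt_nonneg 3
  constructor <;> nlinarith

lemma sqrt2_bounds : 1.41 < Real.sqrt 2 ∧ Real.sqrt 2 < 1.42 := by
  have h : Real.sqrt 2 ^ 2 = 2 := Real.sq_sqrt (by norm_num)
  have h0 : 0 ≤ Real.sqrt 2 := Real.sqrt_nonneg 2
  constructor <;> nlinarith

lemma sin_lower_aux {s t : ℝ} (hs : 0 < s) (hs2 : s ≤ Real.sqrt 3 / 2)
    (hts : s ≤ t) (ht : t ≤ Real.sqrt 3) : s / Real.sqrt 2 ≤ Real.sin t := by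
  obtain ⟨h3l, h3u⟩ := sqrt3_bounds
  obtain ⟨h2l, h2u⟩ := sqrt2_bounds
  have hpi1 := Real.pi_gt_d6
  have hpi2 := Real.pi_lt_d2
  have hsu : s ≤ 0.87 := by linarith
  rcases le_or_gt t (π / 2) with hcase | hcase
  · -- t ≤ π/2, so sin t ≥ sin s ≥ s - s³/4 ≥ s/√2
    have hst : Real.sin s ≤ Real.sin t :=
      Real.sin_le_sin_of_le_of_le_pi_div_two (by linarith) hcase hts
    have hcube : s - s ^ 3 / 4 < Real.sin s :=
      by have := Real.sin_gt_sub_cube hs; linarith [pow_pos hs 3]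
    have hss : s ^ 2 ≤ 0.7569 := by nlinarith
    have e1 : s * 1.41 ≤ s * Real.sqrt 2 :=
      mul_le_mul_of_nonneg_left h2l.le hs.le
    have e2 : s ^ 2 * Real.sqrt 2 ≤ 0.7569 * 1.42 := by nlinarith
    have e3 : s ^ 3 * Real.sqrt 2 ≤ s * (0.7569 * 1.42) := by
      have : s ^ 3 * Real.sqrt 2 = s * (s ^ 2 * Real.sqrt 2) := by ring
      rw [this]
      exact mul_le_mul_of_nonneg_left e2 hs.le
    have : s / Real.sqrt 2 ≤ s - s ^ 3 / 4 := by
      rw [div_le_iff₀ (by linarith)]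
      nlinarith
    linarith
  · -- π/2 < t ≤ √3, sin t = cos (t - π/2) ≥ 1 - (t-π/2)²/2
    have heq : Real.cos (t - π / 2) = Real.sin t := Real.cos_sub_pi_div_two t
    have hb : 1 - (t - π / 2) ^ 2 / 2 ≤ Real.cos (t - π / 2) :=
      Real.one_sub_sq_div_two_le_cos
    have h1 : (t - π / 2) ^ 2 ≤ (Real.sqrt 3 - π / 2) ^ 2 := by nlinarith
    have h2 : s / Real.sqrt 2 ≤ 1 - (Real.sqrt 3 - π / 2) ^ 2 / 2 := by
      rw [div_le_iff₀ (by linarith)]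
      nlinarith
    linarith [heq ▸ hb]

/-- For natural numbers `1 ≤ m`, `a < b ≤ m`,
`cos(a√3/(2m))² − cos(b√3/(2m))² ≥ 3/(8m²)`. -/
theorem cos_sq_hamming_gap (m a b : ℕ) (hm : 1 ≤ m) (hab : a < b) (hbm : b ≤ m) :
    3 / (8 * (m : ℝ) ^ 2) ≤
      Real.cos ((a : ℝ) * Real.sqrt 3 / (2 * (m : ℝ))) ^ 2
        - Real.cos ((b : ℝ) * Real.sqrt 3 / (2 * (m : ℝ))) ^ 2 := by
  obtain ⟨h3l, h3u⟩ := sqrt3_bounds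
  have hmr : (1 : ℝ) ≤ (m : ℝ) := by exact_mod_cast hm
  have hmr0 : (0 : ℝ) < (m : ℝ) := by linarith
  set x : ℝ := (a : ℝ) * Real.sqrt 3 / (2 * (m : ℝ)) with hx
  set y : ℝ := (b : ℝ) * Real.sqrt 3 / (2 * (m : ℝ)) with hy
  set s : ℝ := Real.sqrt 3 / (2 * (m : ℝ)) with hsdef
  have hs0 : 0 < s := by rw [hsdef]; positivity
  have hms : (m : ℝ) * s = Real.sqrt 3 / 2 := by
    rw [hsdef]; field_simp
  have hs2 : s ≤ Real.sqrt 3 / 2 := by nlinarith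
  have har : (0 : ℝ) ≤ (a : ℝ) := Nat.cast_nonneg a
  have habr : (a : ℝ) + 1 ≤ (b : ℝ) := by exact_mod_cast hab
  have hbmr : (b : ℝ) ≤ (m : ℝ) := by exact_mod_cast hbm
  have hxval : x = (a : ℝ) * s := by rw [hx, hsdef]; ring
  have hyval : y = (b : ℝ) * s := by rw [hy, hsdef]; ring
  have hx0 : 0 ≤ x := by rw [hxval]; positivity
  have hysm : y ≤ Real.sqrt 3 / 2 := by
    rw [hyval, ← hms]
    exact mul_le_mul_of_nonneg_right hbmr hs0.le
  have hxy : x + s ≤ y := by rw [hxval, hyval]; nlinarith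
  have hid : Real.cos x ^ 2 - Real.cos y ^ 2 = Real.sin (x + y) * Real.sin (y - x) := by
    have h1 : Real.cos (2*x) - Real.cos (2*y) =
        -2 * Real.sin (x + y) * Real.sin (x - y) := by
      have h := Real.cos_sub_cos (2*x) (2*y)
      rw [show (2*x + 2*y)/2 = x + y by ring, show (2*x - 2*y)/2 = x - y by ring] at h
      exact h
    have h2 : Real.cos (2*x) = 2 * Real.cos x ^ 2 - 1 := Real.cos_two_mul x
    have h3 : Real.cos (2*y) = 2 * Real.cos y ^ 2 - 1 := Real.cos_two_mul y
    have h4 : Real.sin (x - y) = - Real.sin (y - x) := by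
      rw [show x - y = -(y - x) by ring, Real.sin_neg]
    linear_combination (-1/2) * h2 + (1/2) * h3 + (1/2) * h1 - Real.sin (x + y) * h4
  rw [hid]
  have hsum : s / Real.sqrt 2 ≤ Real.sin (x + y) := by
    apply sin_lower_aux hs0 hs2
    · rw [hxval, hyval]; nlinarith
    · nlinarith
  have hdiff : s / Real.sqrt 2 ≤ Real.sin (y - x) := by
    apply sin_lower_aux hs0 hs2
    · rw [hxval, hyval]; nlinarith
    · rw [hxval, hyval]; nlinarith
  have e2 : Real.sqrt 2 ^ 2 = 2 := Real.sq_sqrt (by norm_num)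
  have hssq : s ^ 2 = 3 / (4 * (m : ℝ) ^ 2) := by
    rw [hsdef, div_pow, Real.sq_sqrt (by norm_num : (0:ℝ) ≤ 3)]
    ring_nf
  have hfin : (s / Real.sqrt 2) * (s / Real.sqrt 2) = 3 / (8 * (m : ℝ) ^ 2) := by
    have h' : (s / Real.sqrt 2) * (s / Real.sqrt 2) = s ^ 2 / 2 := by
      rw [← sq, div_pow, e2]
    rw [h', hssq]; ring
  rw [← hfin]
  have hpos : 0 < s / Real.sqrt 2 := by positivity
  exact mul_le_mul hsum hdiff hpos.le (le_trans hpos.le hsum)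
end

section
/- For all real numbers m > 0 and x with 0 ≤ x ≤ m, one has (√3/m) · sin(√3·x/m) ≥ (3/(2m²)) · x. -/
open Real

lemma sqrt3_bounds_s6 : (1.7 : ℝ) ≤ Real.sqrt 3 ∧ Real.sqrt 3 ≤ 1.8 := by
  constructor
  · rw [show (1.7:ℝ) = Real.sqrt (1.7^2) by rw [Real.sqrt_sq]; norm_num]
    exact Real.sqrt_le_sqrt (by norm_num)
  · rw [show (1.8:ℝ) = Real.sqrt (1.8^2) by rw [Real.sqrt_sq]; norm_num]
    exact Real.sqrt_le_sqrt (by norm_num)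

lemma sin_sqrt3 : Real.sqrt 3 / 2 ≤ Real.sin (Real.sqrt 3) := by
  obtain ⟨h1, h2⟩ := sqrt3_bounds_s6
  have hpi := Real.pi_gt_d6
  have hpi' := Real.pi_lt_d2
  have : Real.sin (Real.sqrt 3) = Real.sin (π - Real.sqrt 3) := (Real.sin_pi_sub _).symm
  rw [this, show Real.sqrt 3 / 2 = Real.sin (π/3) by rw [Real.sin_pi_div_three]]
  apply Real.sin_le_sin_of_le_of_le_pi_div_two
  · nlinarith
  · nlinarith
  · nlinarith

lemma half_le_sin {t : ℝ} (h0 : 0 ≤ t) (h1 : t ≤ Real.sqrt 3) : t / 2 ≤ Real.sin t := by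
  obtain ⟨hs1, hs2⟩ := sqrt3_bounds_s6
  have hpi := Real.pi_gt_d6
  have hs0 : (0:ℝ) < Real.sqrt 3 := by linarith
  have key := strictConcaveOn_sin_Icc.concaveOn.2
    (Set.mem_Icc.2 ⟨le_rfl, Real.pi_pos.le⟩) (Set.mem_Icc.2 ⟨hs0.le, by nlinarith⟩)
    (show (0:ℝ) ≤ 1 - t / Real.sqrt 3 by rw [sub_nonneg]; exact div_le_one_of_le₀ h1 hs0.le)
    (div_nonneg h0 hs0.le) (by ring)
  have hx : (1 - t / Real.sqrt 3) • (0:ℝ) + (t / Real.sqrt 3) • Real.sqrt 3 = t := by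
    simp only [smul_eq_mul]; field_simp; ring
  rw [hx, Real.sin_zero, smul_eq_mul, smul_eq_mul, mul_zero, zero_add] at key
  have h3 := sin_sqrt3
  calc t / 2 = t / Real.sqrt 3 * (Real.sqrt 3 / 2) := by field_simp
    _ ≤ t / Real.sqrt 3 * Real.sin (Real.sqrt 3) := by
        apply mul_le_mul_of_nonneg_left h3 (div_nonneg h0 hs0.le)
    _ ≤ Real.sin t := key

/-- For real `m > 0` and `0 ≤ x ≤ m`, `(√3/m)·sin(√3·x/m) ≥ (3/(2m²))·x`. -/
theorem sin_lower_bound (m x : ℝ) (hm : 0 < m) (hx0 : 0 ≤ x) (hxm : x ≤ m) :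
    (3 / (2 * m ^ 2)) * x ≤ (Real.sqrt 3 / m) * Real.sin (Real.sqrt 3 * x / m) := by
  obtain ⟨hs1, hs2⟩ := sqrt3_bounds_s6
  have hs0 : (0:ℝ) < Real.sqrt 3 := by linarith
  set t := Real.sqrt 3 * x / m with ht
  have h0 : 0 ≤ t := by positivity
  have h1 : t ≤ Real.sqrt 3 := by
    rw [ht, div_le_iff₀ hm]
    nlinarith
  have key := half_le_sin h0 h1
  have hsq : Real.sqrt 3 * Real.sqrt 3 = 3 := Real.mul_self_sqrt (by norm_num)
  have : (3 / (2 * m ^ 2)) * x = (Real.sqrt 3 / m) * (t / 2) := by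
    rw [ht]; field_simp; linear_combination (-x) * hsq
  rw [this]
  exact mul_le_mul_of_nonneg_left key (by positivity)
end

section
/- (Exchange inequality, core of the flag-qubit suboptimality lemma) Let m ≥ 1 be a natural number. For a bit string y : Fin m → Bool, let HW(y) denote the number of coordinates i with y i = true, and define C(y) := cos(√3 · HW(y) / (2m))². Let p : Fin m → ℝ satisfy 0 ≤ p i ≤ 1 for all i, and let ε assign to each index i : Fin m and each prefix z : Fin i → Bool a real number ε_i(z) with 0 ≤ ε_i(z) ≤ p i. For each y : Fin m → Bool define the weight q(y) := ∏_{i} t_i(y), where t_i(y) := p i − ε_i(y|_{<i}) if y i = true and t_i(y) := (1 − p i) + ε_i(y|_{<i}) if y i = false (y|_{<i} denotes the restriction of y to coordinates less than i), and define the product weight r(y) := ∏_i (p i if y i = true else 1 − p i). Let ε₀ := ε₀(·) be the value of ε at the first index with the empty prefix. Then ∑_{y : Fin m → Bool} q(y)·C(y) ≥ ∑_{y : Fin m → Bool} r(y)·C(y) + (3/(8m²))·ε₀. -/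
open Finset

set_option maxHeartbeats 1000000 in

lemma cos_sq_gap (m k : ℕ) (hm : 1 ≤ m) (hk : k + 1 ≤ m) :
    Real.cos (Real.sqrt 3 * ((k:ℝ)+1) / (2*m)) ^ 2 + 3 / (8 * (m:ℝ)^2)
      ≤ Real.cos (Real.sqrt 3 * (k:ℝ) / (2*m)) ^ 2 := by
  have hm1 : (1:ℝ) ≤ (m:ℝ) := by exact_mod_cast hm
  have hmpos : (0:ℝ) < (m:ℝ) := by linarith
  have hs3sq : Real.sqrt 3 ^ 2 = 3 := Real.sq_sqrt (by norm_num)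
  have hs3nn : (0:ℝ) ≤ Real.sqrt 3 := Real.sqrt_nonneg 3
  have hs3lt2 : Real.sqrt 3 < 2 := by nlinarith
  have hs3gt1 : 1 < Real.sqrt 3 := by nlinarith
  set d : ℝ := Real.sqrt 3 / (2*m) with hd
  have hd0 : 0 < d := by positivity
  have hdsq : d^2 = 3 / (4*(m:ℝ)^2) := by
    rw [hd, div_pow, hs3sq]; ring_nf
  have hd1 : d ≤ 1 := by
    rw [hd, div_le_one (by positivity)]; nlinarith
  set a : ℝ := Real.sqrt 3 * (k:ℝ) / (2*m) with ha
  set b : ℝ := Real.sqrt 3 * ((k:ℝ)+1) / (2*m) with hb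
  have hba : b = a + d := by rw [hb, ha, hd]; ring
  set u : ℝ := a + b with hu
  -- key identity
  have key : Real.cos a ^ 2 - Real.cos b ^ 2 = Real.sin u * Real.sin d := by
    have h1 := Real.cos_sq a
    have h2 := Real.cos_sq b
    have h3 := Real.cos_sub_cos (2*a) (2*b)
    have e1 : (2*a+2*b)/2 = u := by rw [hu]; ring
    have e2 : (2*a-2*b)/2 = -d := by rw [hba]; ring
    rw [e1, e2, Real.sin_neg] at h3
    nlinarith [h3, h1, h2]
  -- bounds on u
  have hknn : (0:ℝ) ≤ (k:ℝ) := Nat.cast_nonneg k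
  have hk1 : (k:ℝ) + 1 ≤ (m:ℝ) := by exact_mod_cast hk
  have hud : d ≤ u := by
    rw [hu, ha, hb, hd, ← add_div]
    gcongr
    nlinarith
  have hus : u ≤ Real.sqrt 3 - d := by
    have hrw : Real.sqrt 3 - d = (Real.sqrt 3 * (2*(m:ℝ)) - Real.sqrt 3) / (2*m) := by
      rw [hd]; field_simp
    rw [hu, ha, hb, ← add_div, hrw]
    gcongr
    nlinarith
  -- sin d lower bound
  have hsind : 13/16 * d ≤ Real.sin d := by
    have h := Real.sin_gt_sub_cube hd0
    have hm2 : (1:ℝ) ≤ (m:ℝ)^2 := by nlinarith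
    have hdle : d^2 ≤ 3/4 := by
      rw [hdsq]
      have h4 : (0:ℝ) < 4*(m:ℝ)^2 := by positivity
      rw [div_le_div_iff₀ h4 (by norm_num : (0:ℝ) < 4)]
      nlinarith
    nlinarith [hd0.le]
  have hsind0 : 0 < Real.sin d := by nlinarith
  -- sin u ≥ sin d
  have hpi : (3:ℝ) < Real.pi := Real.pi_gt_three
  have hsinu : Real.sin d ≤ Real.sin u := by
    have h := Real.sin_sub_sin u d
    have h1 : 0 ≤ Real.sin ((u - d)/2) := by
      apply Real.sin_nonneg_of_nonneg_of_le_pi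
      · linarith
      · nlinarith
    have h2 : 0 ≤ Real.cos ((u + d)/2) := by
      apply Real.cos_nonneg_of_mem_Icc
      rw [Set.mem_Icc]
      constructor <;> nlinarith
    nlinarith [h]
  -- conclude
  have hfin : 3 / (8*(m:ℝ)^2) ≤ Real.sin u * Real.sin d := by
    have h1 : Real.sin d * Real.sin d ≤ Real.sin u * Real.sin d :=
      mul_le_mul_of_nonneg_right hsinu hsind0.le
    have h2 : (13/16*d) * (13/16*d) ≤ Real.sin d * Real.sin d := by nlinarith
    have h3 : (13/16*d) * (13/16*d) = 169/256 * d^2 := by ring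
    rw [hdsq] at h3
    have : 3/(8*(m:ℝ)^2) ≤ 169/256 * (3/(4*(m:ℝ)^2)) := by
      rw [show (169:ℝ)/256 * (3/(4*(m:ℝ)^2)) = 507/(1024*(m:ℝ)^2) by field_simp; ring]
      rw [div_le_div_iff₀ (by positivity) (by positivity)]
      nlinarith
    linarith
  linarith [key, hfin]

namespace FlagAux

variable {m : ℕ}

def pre (i : Fin m) (y : Fin m → Bool) : Fin (i : ℕ) → Bool :=
  fun j => y ⟨(j : ℕ), lt_trans j.isLt i.isLt⟩

variable (p : Fin m → ℝ) (ε : (i : Fin m) → ((Fin (i : ℕ) → Bool) → ℝ))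

def qf (i : Fin m) (y : Fin m → Bool) : ℝ :=
  if y i then p i - ε i (pre i y) else (1 - p i) + ε i (pre i y)

def rf (i : Fin m) (y : Fin m → Bool) : ℝ := if y i then p i else 1 - p i

def hyb (j : ℕ) (i : Fin m) (y : Fin m → Bool) : ℝ :=
  if (i : ℕ) < j then qf p ε i y else rf p i y

lemma hyb_nonneg (hp0 : ∀ i, 0 ≤ p i) (hp1 : ∀ i, p i ≤ 1)
    (hε0 : ∀ i z, 0 ≤ ε i z) (hεp : ∀ i z, ε i z ≤ p i)
    (j : ℕ) (i : Fin m) (y : Fin m → Bool) : 0 ≤ hyb p ε j i y := by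
  unfold hyb qf rf
  split_ifs
  · linarith [hεp i (pre i y)]
  · linarith [hε0 i (pre i y), hp1 i]
  · exact hp0 i
  · linarith [hp1 i]

lemma hyb_succ_of_ne (J i : Fin m) (hi : i ≠ J) (j : ℕ) (hj : J.val = j) (y : Fin m → Bool) :
    hyb p ε (j+1) i y = hyb p ε j i y := by
  unfold hyb
  have hne : (i : ℕ) ≠ j := by rw [← hj]; exact fun h => hi (Fin.ext h)
  rw [if_congr (by omega : ((i:ℕ) < j+1) ↔ ((i:ℕ) < j)) rfl rfl]

lemma pre_agree (J : Fin m) {y y' : Fin m → Bool} (h : ∀ i, i ≠ J → y i = y' i) :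
    pre J y = pre J y' := by
  funext j
  exact h _ (fun hc => absurd (congrArg Fin.val hc) (by simpa using j.isLt.ne))

lemma hyb_agree (J : Fin m) {y y' : Fin m → Bool} (h : ∀ i, i ≠ J → y i = y' i)
    {i : Fin m} (hi : i ≠ J) (j : ℕ) (hj : j ≤ J.val) :
    hyb p ε j i y = hyb p ε j i y' := by
  unfold hyb
  by_cases hlt : (i : ℕ) < j
  · rw [if_pos hlt, if_pos hlt]
    unfold qf
    have hyi : y i = y' i := h i hi
    have hpre : pre i y = pre i y' := by
      funext l
      have hl : (l : ℕ) < (i : ℕ) := l.isLt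
      refine h _ (fun hc => ?_)
      have hv : (l : ℕ) = (J : ℕ) := congrArg Fin.val hc
      omega
    rw [hyi, hpre]
  · rw [if_neg hlt, if_neg hlt]
    unfold rf
    rw [h i hi]

/-- Pairing a sum over all bit strings by the value at coordinate `J`. -/
lemma sum_pair (J : Fin m) (g : (Fin m → Bool) → ℝ) :
    ∑ y : Fin m → Bool, g y
      = ∑ y ∈ univ.filter (fun y => y J = false), (g y + g (Function.update y J true)) := by
  have h1 : ∑ y : Fin m → Bool, g y
      = ∑ y ∈ univ.filter (fun y => y J = false), g y
        + ∑ y ∈ univ.filter (fun y => ¬ (y J = false)), g y :=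
    (Finset.sum_filter_add_sum_filter_not univ _ g).symm
  have h2 : univ.filter (fun y : Fin m → Bool => ¬ (y J = false))
      = univ.filter (fun y => y J = true) := by
    apply Finset.filter_congr; intro y _; simp
  have h3 : ∑ y ∈ univ.filter (fun y : Fin m → Bool => y J = true), g y
      = ∑ y ∈ univ.filter (fun y => y J = false), g (Function.update y J true) := by
    apply Finset.sum_nbij' (i := fun y => Function.update y J false)
      (j := fun y => Function.update y J true)
    · intro a ha
      simp only [mem_filter, mem_univ, true_and] at ha ⊢
      simp
    · intro a ha
      simp only [mem_filter, mem_univ, true_and] at ha ⊢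
      simp
    · intro a ha
      simp only [mem_filter, mem_univ, true_and] at ha
      rw [Function.update_idem, ← ha, Function.update_eq_self]
    · intro a ha
      simp only [mem_filter, mem_univ, true_and] at ha
      rw [Function.update_idem, ← ha, Function.update_eq_self]
    · intro a ha
      simp only [mem_filter, mem_univ, true_and] at ha
      rw [Function.update_idem, ← ha, Function.update_eq_self]
  rw [h1, h2, h3, sum_add_distrib]

lemma step_eq (f : (Fin m → Bool) → ℝ) (J : Fin m) :
    (∑ y : Fin m → Bool, (∏ i, hyb p ε ((J : ℕ)+1) i y) * f y)
      = (∑ y : Fin m → Bool, (∏ i, hyb p ε (J : ℕ) i y) * f y)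
        + ∑ y ∈ univ.filter (fun y => y J = false),
            ((∏ i ∈ univ.erase J, hyb p ε (J : ℕ) i y) * ε J (pre J y)
              * (f y - f (Function.update y J true))) := by
  rw [sum_pair J (fun y => (∏ i, hyb p ε ((J : ℕ)+1) i y) * f y),
    sum_pair J (fun y => (∏ i, hyb p ε (J : ℕ) i y) * f y),
    ← sum_add_distrib]
  apply Finset.sum_congr rfl
  intro y hy
  simp only [mem_filter, mem_univ, true_and] at hy
  set u := Function.update y J true with hu
  have hag : ∀ i, i ≠ J → u i = y i := fun i hi => Function.update_of_ne hi _ _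
  set w := ∏ i ∈ univ.erase J, hyb p ε (J : ℕ) i y with hw
  have hwu : ∏ i ∈ univ.erase J, hyb p ε (J : ℕ) i u = w := by
    apply Finset.prod_congr rfl
    intro i hi
    exact hyb_agree p ε J hag (Finset.ne_of_mem_erase hi) _ le_rfl
  have hεu : ε J (pre J u) = ε J (pre J y) := by rw [pre_agree J hag]
  have hsplit : ∀ (j : ℕ) (z : Fin m → Bool),
      ∏ i, hyb p ε j i z = hyb p ε j J z * ∏ i ∈ univ.erase J, hyb p ε j i z :=
    fun j z => (Finset.mul_prod_erase univ _ (mem_univ J)).symm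
  have hsucc : ∀ z : Fin m → Bool,
      ∏ i ∈ univ.erase J, hyb p ε ((J : ℕ)+1) i z = ∏ i ∈ univ.erase J, hyb p ε (J : ℕ) i z := by
    intro z
    apply Finset.prod_congr rfl
    intro i hi
    exact hyb_succ_of_ne p ε J i (Finset.ne_of_mem_erase hi) (J : ℕ) rfl z
  have huJ : u J = true := Function.update_self J true y
  have hJ1y : hyb p ε ((J : ℕ)+1) J y = (1 - p J) + ε J (pre J y) := by
    simp [hyb, qf, hy]
  have hJ0y : hyb p ε (J : ℕ) J y = 1 - p J := by
    simp [hyb, rf, hy]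
  have hJ1u : hyb p ε ((J : ℕ)+1) J u = p J - ε J (pre J y) := by
    simp [hyb, qf, huJ, hεu]
  have hJ0u : hyb p ε (J : ℕ) J u = p J := by
    simp [hyb, rf, huJ]
  have e1 : ∏ i, hyb p ε ((J : ℕ)+1) i y = ((1 - p J) + ε J (pre J y)) * w := by
    rw [hsplit, hsucc, hJ1y]
  have e0 : ∏ i, hyb p ε (J : ℕ) i y = (1 - p J) * w := by
    rw [hsplit, hJ0y]
  have e1u : ∏ i, hyb p ε ((J : ℕ)+1) i u = (p J - ε J (pre J y)) * w := by
    rw [hsplit, hsucc, hwu, hJ1u]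
  have e0u : ∏ i, hyb p ε (J : ℕ) i u = p J * w := by
    rw [hsplit, hwu, hJ0u]
  rw [e1, e0, e1u, e0u]
  ring

lemma sum_w_one (hp0 : ∀ i, 0 ≤ p i) (J : Fin m) :
    ∑ y ∈ univ.filter (fun y => y J = false), ∏ i ∈ univ.erase J, rf p i y = 1 := by
  have htot : ∑ y : Fin m → Bool, ∏ i, rf p i y = 1 := by
    have h := Fintype.prod_sum (fun (i : Fin m) (b : Bool) => if b then p i else 1 - p i)
    have h2 : ∑ y : Fin m → Bool, ∏ i, rf p i y
        = ∏ i : Fin m, ∑ b : Bool, (if b then p i else 1 - p i) := h.symm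
    rw [h2]
    have : ∀ i : Fin m, (∑ b : Bool, (if b then p i else 1 - p i)) = 1 := by
      intro i
      rw [Fintype.sum_bool]
      simp
    rw [Finset.prod_congr rfl (fun i _ => this i)]
    exact Finset.prod_const_one
  rw [sum_pair J (fun y => ∏ i, rf p i y)] at htot
  rw [← htot]
  apply Finset.sum_congr rfl
  intro y hy
  simp only [mem_filter, mem_univ, true_and] at hy
  set u := Function.update y J true with hu
  have huJ : u J = true := Function.update_self J true y
  have hwu : ∏ i ∈ univ.erase J, rf p i u = ∏ i ∈ univ.erase J, rf p i y := by
    apply Finset.prod_congr rfl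
    intro i hi
    unfold rf
    rw [hu, Function.update_of_ne (Finset.ne_of_mem_erase hi)]
  have e1 : ∏ i, rf p i y = (1 - p J) * ∏ i ∈ univ.erase J, rf p i y := by
    rw [← Finset.mul_prod_erase univ _ (mem_univ J)]
    unfold rf
    rw [hy]
    simp
  have e2 : ∏ i, rf p i u = p J * ∏ i ∈ univ.erase J, rf p i y := by
    rw [← Finset.mul_prod_erase univ _ (mem_univ J), hwu]
    unfold rf
    rw [huJ]
    simp
  rw [e1, e2]
  ring

section Steps

variable (hp0 : ∀ i, 0 ≤ p i) (hp1 : ∀ i, p i ≤ 1)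
    (hε0 : ∀ i z, 0 ≤ ε i z) (hεp : ∀ i z, ε i z ≤ p i)
    (f : (Fin m → Bool) → ℝ) (δ : ℝ) (hδ : 0 ≤ δ)
    (hgap : ∀ (J : Fin m) (y : Fin m → Bool),
      f (Function.update y J true) + δ ≤ f (Function.update y J false))

include hp0 hp1 hε0 hεp hδ hgap

lemma gap_of_false (J : Fin m) (y : Fin m → Bool) (hy : y J = false) :
    f (Function.update y J true) + δ ≤ f y := by
  have h := hgap J y
  rwa [show Function.update y J false = y by rw [← hy]; exact Function.update_eq_self J y] at h

lemma hs_step (j : ℕ) (hj : j < m) :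
    (∑ y : Fin m → Bool, (∏ i, hyb p ε j i y) * f y)
      ≤ ∑ y : Fin m → Bool, (∏ i, hyb p ε (j+1) i y) * f y := by
  have h := step_eq p ε f ⟨j, hj⟩
  rw [h]
  have hS : 0 ≤ ∑ y ∈ univ.filter (fun y => y (⟨j, hj⟩ : Fin m) = false),
      ((∏ i ∈ univ.erase (⟨j, hj⟩ : Fin m), hyb p ε ((⟨j, hj⟩ : Fin m) : ℕ) i y)
        * ε ⟨j, hj⟩ (pre ⟨j, hj⟩ y)
        * (f y - f (Function.update y ⟨j, hj⟩ true))) := by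
    apply Finset.sum_nonneg
    intro y hy
    simp only [mem_filter, mem_univ, true_and] at hy
    have h1 : 0 ≤ ∏ i ∈ univ.erase (⟨j, hj⟩ : Fin m), hyb p ε ((⟨j, hj⟩ : Fin m) : ℕ) i y :=
      Finset.prod_nonneg (fun i _ => hyb_nonneg p ε hp0 hp1 hε0 hεp _ i y)
    have h2 : 0 ≤ ε ⟨j, hj⟩ (pre ⟨j, hj⟩ y) := hε0 _ _
    have h3 : 0 ≤ f y - f (Function.update y ⟨j, hj⟩ true) := by
      have := gap_of_false p ε hp0 hp1 hε0 hεp f δ hδ hgap ⟨j, hj⟩ y hy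
      linarith
    exact mul_nonneg (mul_nonneg h1 h2) h3
  linarith

lemma hs_step0 (hm : 0 < m) :
    (∑ y : Fin m → Bool, (∏ i, hyb p ε 0 i y) * f y)
        + δ * ε ⟨0, hm⟩ (fun k => k.elim0)
      ≤ ∑ y : Fin m → Bool, (∏ i, hyb p ε 1 i y) * f y := by
  have h := step_eq p ε f ⟨0, hm⟩
  rw [h]
  set J : Fin m := ⟨0, hm⟩ with hJ
  set E : ℝ := ε J (fun k => k.elim0) with hE
  have hεconst : ∀ y : Fin m → Bool, ε J (pre J y) = E := by
    intro y
    exact congrArg (ε J) (funext fun k => k.elim0)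
  have hE0 : 0 ≤ E := hε0 _ _
  have hrf : ∀ y : Fin m → Bool, ∀ i ∈ univ.erase J,
      hyb p ε ((J : ℕ)) i y = rf p i y := by
    intro y i _
    unfold hyb
    exact if_neg (Nat.not_lt_zero _)
  have hw1 : ∑ y ∈ univ.filter (fun y => y J = false),
      ∏ i ∈ univ.erase J, hyb p ε ((J : ℕ)) i y = 1 := by
    rw [Finset.sum_congr rfl (fun y _ => Finset.prod_congr rfl (hrf y))]
    exact sum_w_one p hp0 J
  have hbound : ∑ y ∈ univ.filter (fun y => y J = false),
        ((∏ i ∈ univ.erase J, hyb p ε ((J : ℕ)) i y) * (E * δ))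
      ≤ ∑ y ∈ univ.filter (fun y => y J = false),
        ((∏ i ∈ univ.erase J, hyb p ε ((J : ℕ)) i y) * ε J (pre J y)
          * (f y - f (Function.update y J true))) := by
    apply Finset.sum_le_sum
    intro y hy
    simp only [mem_filter, mem_univ, true_and] at hy
    have h1 : 0 ≤ ∏ i ∈ univ.erase J, hyb p ε ((J : ℕ)) i y :=
      Finset.prod_nonneg (fun i _ => hyb_nonneg p ε hp0 hp1 hε0 hεp _ i y)
    have h3 : δ ≤ f y - f (Function.update y J true) := by
      have := gap_of_false p ε hp0 hp1 hε0 hεp f δ hδ hgap J y hy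
      linarith
    rw [hεconst y]
    calc (∏ i ∈ univ.erase J, hyb p ε ((J : ℕ)) i y) * (E * δ)
        = (∏ i ∈ univ.erase J, hyb p ε ((J : ℕ)) i y) * E * δ := by ring
      _ ≤ (∏ i ∈ univ.erase J, hyb p ε ((J : ℕ)) i y) * E
            * (f y - f (Function.update y J true)) := by
          apply mul_le_mul_of_nonneg_left h3 (mul_nonneg h1 hE0)
  have hsum : ∑ y ∈ univ.filter (fun y => y J = false),
      ((∏ i ∈ univ.erase J, hyb p ε ((J : ℕ)) i y) * (E * δ)) = E * δ := by
    rw [← Finset.sum_mul, hw1, one_mul]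
  rw [hsum] at hbound
  linarith [hbound, mul_comm δ E]

lemma hs_chain (hm : 0 < m) :
    (∑ y : Fin m → Bool, (∏ i, hyb p ε 0 i y) * f y)
        + δ * ε ⟨0, hm⟩ (fun k => k.elim0)
      ≤ ∑ y : Fin m → Bool, (∏ i, hyb p ε m i y) * f y := by
  have main : ∀ n, 1 ≤ n → n ≤ m →
      (∑ y : Fin m → Bool, (∏ i, hyb p ε 0 i y) * f y)
          + δ * ε ⟨0, hm⟩ (fun k => k.elim0)
        ≤ ∑ y : Fin m → Bool, (∏ i, hyb p ε n i y) * f y := by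
    intro n
    induction n with
    | zero => omega
    | succ n ih =>
      intro _ hnm
      rcases Nat.eq_zero_or_pos n with hn | hn
      · subst hn
        exact hs_step0 p ε hp0 hp1 hε0 hεp f δ hδ hgap hm
      · calc (∑ y : Fin m → Bool, (∏ i, hyb p ε 0 i y) * f y)
              + δ * ε ⟨0, hm⟩ (fun k => k.elim0)
            ≤ ∑ y : Fin m → Bool, (∏ i, hyb p ε n i y) * f y := ih hn (by omega)
          _ ≤ ∑ y : Fin m → Bool, (∏ i, hyb p ε (n+1) i y) * f y :=
              hs_step p ε hp0 hp1 hε0 hεp f δ hδ hgap n (by omega)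
  exact main m hm le_rfl

end Steps

end FlagAux

/-- Exchange inequality (core of the flag-qubit suboptimality lemma).
`q y` is the probability weight of outcome string `y` under the (possibly entangled) proof,
built from conditional acceptance probabilities `p i − ε i (prefix)`, while `r y` is the
weight under the optimal product proof. The weighted sum of
`C(y) = cos(√3·HW(y)/(2m))²` under `q` exceeds that under `r` by at least `(3/(8m²))·ε₀`. -/
theorem flag_qubit_exchange_inequality (m : ℕ) (hm : 1 ≤ m)
    (p : Fin m → ℝ) (hp0 : ∀ i, 0 ≤ p i) (hp1 : ∀ i, p i ≤ 1)
    (ε : (i : Fin m) → ((Fin (i : ℕ) → Bool) → ℝ))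
    (hε0 : ∀ i z, 0 ≤ ε i z) (hεp : ∀ i z, ε i z ≤ p i) :
    (∑ y : Fin m → Bool,
        (∏ i : Fin m, (if y i then p i - ε i (fun j => y ⟨(j : ℕ), lt_trans j.isLt i.isLt⟩)
            else (1 - p i) + ε i (fun j => y ⟨(j : ℕ), lt_trans j.isLt i.isLt⟩))) *
          Real.cos (Real.sqrt 3 * ((Finset.univ.filter fun i => y i = true).card : ℝ)
              / (2 * (m : ℝ))) ^ 2)
      ≥
    (∑ y : Fin m → Bool,
        (∏ i : Fin m, (if y i then p i else 1 - p i)) *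
          Real.cos (Real.sqrt 3 * ((Finset.univ.filter fun i => y i = true).card : ℝ)
              / (2 * (m : ℝ))) ^ 2)
      + (3 / (8 * (m : ℝ) ^ 2)) * ε ⟨0, hm⟩ (fun j => j.elim0) := by
  classical
  set f : (Fin m → Bool) → ℝ := fun y =>
    Real.cos (Real.sqrt 3 * ((Finset.univ.filter fun i => y i = true).card : ℝ)
      / (2 * (m : ℝ))) ^ 2 with hf
  set δ : ℝ := 3 / (8 * (m : ℝ) ^ 2) with hδdef
  have hmpos : (0:ℝ) < (m:ℝ) := by exact_mod_cast hm
  have hδ : 0 ≤ δ := by rw [hδdef]; positivity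
  -- the gap hypothesis
  have hgap : ∀ (J : Fin m) (y : Fin m → Bool),
      f (Function.update y J true) + δ ≤ f (Function.update y J false) := by
    intro J y
    set s : Finset (Fin m) := univ.filter (fun i => Function.update y J false i = true) with hs
    have hJs : J ∉ s := by
      simp [hs, Function.update_self]
    have hts : univ.filter (fun i => Function.update y J true i = true) = insert J s := by
      ext i
      by_cases hi : i = J
      · subst hi
        simp [Function.update_self]
      · simp only [mem_filter, mem_univ, true_and, Finset.mem_insert, hs]
        rw [Function.update_of_ne hi, Function.update_of_ne hi]
        simp [hi]
    have hcard : (univ.filter (fun i => Function.update y J true i = true)).card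
        = s.card + 1 := by
      rw [hts, Finset.card_insert_of_notMem hJs]
    have hle : s.card + 1 ≤ m := by
      rw [← hcard]
      calc (univ.filter (fun i => Function.update y J true i = true)).card
          ≤ (univ : Finset (Fin m)).card := Finset.card_le_card (Finset.filter_subset _ _)
        _ = m := by rw [Finset.card_univ, Fintype.card_fin]
    have := cos_sq_gap m s.card hm hle
    simp only [hf]
    rw [hcard]
    push_cast
    convert this using 3
  -- identify the two sums with hybrid sums
  have hq : ∀ y : Fin m → Bool,
      (∏ i : Fin m, (if y i then p i - ε i (fun j => y ⟨(j : ℕ), lt_trans j.isLt i.isLt⟩)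
        else (1 - p i) + ε i (fun j => y ⟨(j : ℕ), lt_trans j.isLt i.isLt⟩)))
      = ∏ i, FlagAux.hyb p ε m i y := by
    intro y
    apply Finset.prod_congr rfl
    intro i _
    unfold FlagAux.hyb FlagAux.qf FlagAux.pre
    rw [if_pos i.isLt]
  have hr : ∀ y : Fin m → Bool,
      (∏ i : Fin m, (if y i then p i else 1 - p i)) = ∏ i, FlagAux.hyb p ε 0 i y := by
    intro y
    apply Finset.prod_congr rfl
    intro i _
    unfold FlagAux.hyb FlagAux.rf
    rw [if_neg (Nat.not_lt_zero _)]
  have hchain := FlagAux.hs_chain p ε hp0 hp1 hε0 hεp f δ hδ hgap hm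
  calc (∑ y : Fin m → Bool,
        (∏ i : Fin m, (if y i then p i - ε i (fun j => y ⟨(j : ℕ), lt_trans j.isLt i.isLt⟩)
            else (1 - p i) + ε i (fun j => y ⟨(j : ℕ), lt_trans j.isLt i.isLt⟩))) * f y)
      = ∑ y : Fin m → Bool, (∏ i, FlagAux.hyb p ε m i y) * f y := by
        apply Finset.sum_congr rfl; intro y _; rw [hq y]
    _ ≥ (∑ y : Fin m → Bool, (∏ i, FlagAux.hyb p ε 0 i y) * f y)
          + δ * ε ⟨0, hm⟩ (fun k => k.elim0) := hchain
    _ = (∑ y : Fin m → Bool, (∏ i : Fin m, (if y i then p i else 1 - p i)) * f y)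
          + δ * ε ⟨0, hm⟩ (fun k => k.elim0) := by
        have heq : (∑ y : Fin m → Bool, (∏ i, FlagAux.hyb p ε 0 i y) * f y)
            = ∑ y : Fin m → Bool, (∏ i : Fin m, (if y i then p i else 1 - p i)) * f y :=
          Finset.sum_congr rfl (fun y _ => by rw [hr y])
        rw [heq]
end

section
/- Let ℋ be a finite-dimensional complex inner product space. Let A be a nonzero positive semidefinite self-adjoint operator on ℋ with nontrivial kernel, and let Δ > 0 be such that ⟨x, A x⟩ ≥ Δ‖x‖² for every x orthogonal to ker A (e.g. Δ the smallest nonzero eigenvalue of A). Let M be a nonzero self-adjoint operator with operator norm ‖M‖, and let α be a real number with α > max(4‖M‖/Δ, Δ/(3‖M‖²), 1). Set H := α·A + M. Then for every δ with 0 ≤ δ ≤ 1/α² and every unit vector ψ with ⟨ψ, H ψ⟩ ≤ λmin(H) + δ, there exists a unit vector φ ∈ ker A such that √(1 − |⟨ψ, φ⟩|²) ≤ 6‖M‖/(αΔ) and ⟨φ, H φ⟩ ≤ λmin(H) + δ + 12‖M‖²/(αΔ). -/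
open scoped ComplexInnerProductSpace

private lemma re_inner_clm_le {ℋ : Type*} [NormedAddCommGroup ℋ] [InnerProductSpace ℂ ℋ]
    (T : ℋ →L[ℂ] ℋ) (x y : ℋ) : |(⟪x, T y⟫).re| ≤ ‖x‖ * (‖T‖ * ‖y‖) := by
  calc |(⟪x, T y⟫).re| ≤ ‖⟪x, T y⟫‖ := by
        exact Complex.abs_re_le_norm _
    _ ≤ ‖x‖ * ‖T y‖ := norm_inner_le_norm _ _
    _ ≤ ‖x‖ * (‖T‖ * ‖y‖) := by gcongr; exact T.le_opNorm y

private lemma lamMin_le_aux {ℋ : Type*} [NormedAddCommGroup ℋ] [InnerProductSpace ℂ ℋ]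
    (H : ℋ →L[ℂ] ℋ) (x : ℋ) (hx : ‖x‖ = 1) : lamMin H ≤ (⟪x, H x⟫).re := by
  apply csInf_le
  · refine ⟨-‖H‖, ?_⟩
    rintro r ⟨y, hy, rfl⟩
    have h1 := re_inner_clm_le H y y
    rw [hy] at h1
    linarith [(abs_le.mp h1).1]
  · exact ⟨x, hx, rfl⟩

set_option maxHeartbeats 2000000 in
/-- Any low-energy state of `H = α·A + M` is close to a state `φ` in the kernel of `A`,
and that kernel state has nearly the same energy. -/
theorem low_energy_state_close_to_kernel_history_state
    {ℋ : Type*} [NormedAddCommGroup ℋ] [InnerProductSpace ℂ ℋ] [FiniteDimensional ℂ ℋ]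
    (A : ℋ →L[ℂ] ℋ) (hA : IsSelfAdjoint A) (hA0 : A ≠ 0)
    (hApos : ∀ x : ℋ, 0 ≤ (⟪x, A x⟫).re)
    (hker : LinearMap.ker (A : ℋ →ₗ[ℂ] ℋ) ≠ ⊥)
    (Δ : ℝ) (hΔ : 0 < Δ)
    (hgap : ∀ x ∈ (LinearMap.ker (A : ℋ →ₗ[ℂ] ℋ))ᗮ, Δ * ‖x‖ ^ 2 ≤ (⟪x, A x⟫).re)
    (M : ℋ →L[ℂ] ℋ) (hM : IsSelfAdjoint M) (hM0 : M ≠ 0)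
    (α : ℝ) (hα : max (max (4 * ‖M‖ / Δ) (Δ / (3 * ‖M‖ ^ 2))) 1 < α)
    (δ : ℝ) (hδ0 : 0 ≤ δ) (hδ : δ ≤ 1 / α ^ 2)
    (ψ : ℋ) (hψ : ‖ψ‖ = 1)
    (hlow : (⟪ψ, ((α : ℂ) • A + M) ψ⟫).re ≤ lamMin ((α : ℂ) • A + M) + δ) :
    ∃ φ ∈ LinearMap.ker (A : ℋ →ₗ[ℂ] ℋ), ‖φ‖ = 1 ∧
      Real.sqrt (1 - ‖⟪ψ, φ⟫‖ ^ 2) ≤ 6 * ‖M‖ / (α * Δ) ∧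
      (⟪φ, ((α : ℂ) • A + M) φ⟫).re ≤
        lamMin ((α : ℂ) • A + M) + δ + 12 * ‖M‖ ^ 2 / (α * Δ) := by
  classical
  set Hop : ℋ →L[ℂ] ℋ := (α : ℂ) • A + M with hHop
  set K : Submodule ℂ ℋ := LinearMap.ker (A : ℋ →ₗ[ℂ] ℋ) with hKdef
  -- numeric facts
  have hmM : (0:ℝ) < ‖M‖ := norm_pos_iff.mpr hM0
  have hα1 : (1:ℝ) < α := lt_of_le_of_lt (le_max_right _ _) hα
  have hα0 : (0:ℝ) < α := by linarith
  have hαΔ : 4 * ‖M‖ < α * Δ := by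
    have h := lt_of_le_of_lt (le_trans (le_max_left _ _) (le_max_left _ _)) hα
    rw [div_lt_iff₀ hΔ] at h; linarith [h]
  have hαΔpos : (0:ℝ) < α * Δ := by positivity
  have hΔα : Δ < 3 * ‖M‖ ^ 2 * α := by
    have h := lt_of_le_of_lt (le_trans (le_max_right _ _) (le_max_left _ _)) hα
    rw [div_lt_iff₀ (by positivity)] at h; linarith [h]
  have hδαΔ : δ * (α * Δ) < 3 * ‖M‖ ^ 2 := by
    have h1 : δ * (α * Δ) ≤ (1 / α ^ 2) * (α * Δ) := by
      apply mul_le_mul_of_nonneg_right hδ hαΔpos.le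
    have h2 : (1 / α ^ 2) * (α * Δ) = Δ / α := by field_simp
    have h3 : Δ / α < 3 * ‖M‖ ^ 2 := by rw [div_lt_iff₀ hα0]; linarith
    linarith [h1, h2 ▸ h1]
  -- decomposition of ψ
  set φ₀ : ℋ := (K.orthogonalProjectionOnto ψ : ℋ) with hφ₀def
  set ψp : ℋ := ψ - φ₀ with hψpdef
  have hφ₀K : φ₀ ∈ K := (K.orthogonalProjectionOnto ψ).2
  have hψpK : ψp ∈ Kᗮ := K.sub_starProjection_mem_orthogonal ψ
  have hsum : ψ = φ₀ + ψp := by simp [hψpdef]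
  have ho : ⟪φ₀, ψp⟫ = 0 := hψpK φ₀ hφ₀K
  have ho' : ⟪ψp, φ₀⟫ = 0 := by
    rw [← inner_conj_symm, ho]; simp
  set b : ℝ := ‖φ₀‖ with hbdef
  set t : ℝ := ‖ψp‖ with htdef
  have hb0 : 0 ≤ b := norm_nonneg _
  have ht0 : 0 ≤ t := norm_nonneg _
  have hpyth : b ^ 2 + t ^ 2 = 1 := by
    have h := norm_add_sq (𝕜 := ℂ) φ₀ ψp
    rw [ho] at h
    simp only [map_zero, mul_zero, add_zero] at h
    rw [← hsum, hψ] at h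
    simpa using h.symm
  have ht1 : t ≤ 1 := by nlinarith only [hpyth, sq_nonneg b, ht0, hb0]
  have hb1 : b ≤ 1 := by nlinarith only [hpyth, sq_nonneg t, ht0, hb0]
  have hAφ₀ : A φ₀ = 0 := hφ₀K
  have hsymA : ∀ x y : ℋ, ⟪A x, y⟫ = ⟪x, A y⟫ := fun x y => by
    conv_lhs => rw [← hA.adjoint_eq]
    exact ContinuousLinearMap.adjoint_inner_left A y x
  have hsymM : ∀ x y : ℋ, ⟪M x, y⟫ = ⟪x, M y⟫ := fun x y => by
    conv_lhs => rw [← hM.adjoint_eq]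
    exact ContinuousLinearMap.adjoint_inner_left M y x
  set m₀ : ℝ := (⟪φ₀, M φ₀⟫).re with hm₀def
  set c : ℝ := (⟪φ₀, M ψp⟫).re with hcdef
  set w : ℝ := (⟪ψp, M ψp⟫).re with hwdef
  set q : ℝ := (⟪ψp, A ψp⟫).re with hqdef
  -- bounds on inner products
  have hc : |c| ≤ ‖M‖ * t := by
    have := re_inner_clm_le M φ₀ ψp
    calc |c| ≤ b * (‖M‖ * t) := this
      _ ≤ 1 * (‖M‖ * t) := by
          apply mul_le_mul_of_nonneg_right hb1 (by positivity)
      _ = ‖M‖ * t := by ring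
  have hw : |w| ≤ ‖M‖ * t ^ 2 := by
    have := re_inner_clm_le M ψp ψp
    calc |w| ≤ t * (‖M‖ * t) := this
      _ = ‖M‖ * t ^ 2 := by ring
  have hm₀ : |m₀| ≤ ‖M‖ * b ^ 2 := by
    have := re_inner_clm_le M φ₀ φ₀
    calc |m₀| ≤ b * (‖M‖ * b) := this
      _ = ‖M‖ * b ^ 2 := by ring
  have hq : Δ * t ^ 2 ≤ q := hgap ψp hψpK
  -- energy of ψ
  have hAψ : (⟪ψ, A ψ⟫).re = q := by
    have h1 : A ψ = A ψp := by
      rw [hsum, map_add, hAφ₀, zero_add]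
    have h2 : ⟪φ₀, A ψp⟫ = 0 := by
      rw [← hsymA φ₀ ψp, hAφ₀, inner_zero_left]
    rw [h1, hsum, inner_add_left, h2, zero_add]
  have hMψ : (⟪ψ, M ψ⟫).re = m₀ + 2 * c + w := by
    have h2 : (⟪ψp, M φ₀⟫).re = c := by
      rw [hcdef, ← hsymM ψp φ₀, ← inner_conj_symm (M ψp) φ₀]
      exact Complex.conj_re _
    rw [hsum]
    simp only [map_add, inner_add_left, inner_add_right, Complex.add_re]
    rw [hm₀def, hcdef, hwdef] at *
    linarith only [h2]
  have hEψ : (⟪ψ, Hop ψ⟫).re = α * q + (m₀ + 2 * c + w) := by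
    simp only [hHop, ContinuousLinearMap.add_apply, ContinuousLinearMap.smul_apply,
      inner_add_right, inner_smul_right, Complex.add_re, Complex.mul_re,
      Complex.ofReal_re, Complex.ofReal_im]
    rw [hAψ, hMψ]; ring
  -- lamMin ≤ ‖M‖ via a unit vector in the kernel
  have hunitK : ∀ χ : ℋ, χ ∈ K → ‖χ‖ = 1 → (⟪χ, Hop χ⟫).re = (⟪χ, M χ⟫).re := by
    intro χ hχ hχ1
    have hAχ : A χ = 0 := hχ
    simp [hHop, ContinuousLinearMap.add_apply, ContinuousLinearMap.smul_apply, hAχ]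
  have hlamub : lamMin Hop ≤ ‖M‖ := by
    obtain ⟨x, hxK, hx0⟩ := (Submodule.ne_bot_iff K).mp hker
    have hxn : (0:ℝ) < ‖x‖ := norm_pos_iff.mpr hx0
    set χ : ℋ := ((‖x‖ : ℂ))⁻¹ • x with hχdef
    have hχK : χ ∈ K := K.smul_mem _ hxK
    have hχ1 : ‖χ‖ = 1 := by
      rw [hχdef, norm_smul]
      simp [hxn.ne']
    have := lamMin_le_aux Hop χ hχ1
    rw [hunitK χ hχK hχ1] at this
    refine le_trans this ?_
    have h := re_inner_clm_le M χ χ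
    rw [hχ1] at h
    linarith [(abs_le.mp h).2]
  -- crude bound
  have hMψbound : |(⟪ψ, M ψ⟫).re| ≤ ‖M‖ := by
    have h := re_inner_clm_le M ψ ψ
    rw [hψ] at h; linarith [h]
  have hcrude : α * Δ * t ^ 2 ≤ 2 * ‖M‖ + δ := by
    have h1 : α * Δ * t ^ 2 - ‖M‖ ≤ (⟪ψ, Hop ψ⟫).re := by
      rw [hEψ, hMψ.symm]
      have : α * (Δ * t ^ 2) ≤ α * q := by
        apply mul_le_mul_of_nonneg_left hq hα0.le
      linarith only [this, (abs_le.mp hMψbound).1]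
    linarith only [h1, hlow, hlamub]
  have hδle : δ ≤ 3 * ‖M‖ / 4 := by
    nlinarith only [mul_nonneg hδ0 (by linarith only [hαΔ] : (0:ℝ) ≤ α * Δ - 4 * ‖M‖), hδαΔ, hmM]
  have ht2 : t ^ 2 ≤ 11 / 16 := by
    nlinarith only [mul_nonneg (by linarith only [hαΔ] : (0:ℝ) ≤ α * Δ - 4 * ‖M‖) (sq_nonneg t), hcrude, hδle, hmM]
  have hbpos : 0 < b := by nlinarith only [ht2, hpyth, hb0]
  have hb2pos : 0 < b ^ 2 := by positivity
  -- the candidate φ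
  set φ : ℋ := ((b : ℂ))⁻¹ • φ₀ with hφdef
  have hφK : φ ∈ K := K.smul_mem _ hφ₀K
  have hφ1 : ‖φ‖ = 1 := by
    rw [hφdef, norm_smul]
    simp [hbpos.ne', hbdef]
    exact inv_mul_cancel₀ hbpos.ne'
  have hip : ⟪ψ, φ⟫ = (b : ℂ) := by
    rw [hφdef, hsum, inner_add_left, inner_smul_right, inner_smul_right, ho',
      inner_self_eq_norm_sq_to_K]
    rw [← hbdef]
    have : (b : ℂ) ≠ 0 := by exact_mod_cast hbpos.ne'
    field_simp
    simp
  have hipn : ‖⟪ψ, φ⟫‖ ^ 2 = b ^ 2 := by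
    rw [hip]
    simp [abs_of_nonneg hb0]
  -- energy of φ
  have hφM : (⟪φ, Hop φ⟫).re = m₀ / b ^ 2 := by
    have hAφ : A φ = 0 := hφK
    have h1 : Hop φ = M φ := by
      simp [hHop, ContinuousLinearMap.add_apply, ContinuousLinearMap.smul_apply, hAφ]
    rw [h1, hφdef, map_smul, inner_smul_left, inner_smul_right]
    have hbC : (b : ℂ) ≠ 0 := by exact_mod_cast hbpos.ne'
    have e1 : (starRingEnd ℂ) (((b:ℂ))⁻¹) * (((b:ℂ))⁻¹ * ⟪φ₀, M φ₀⟫)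
        = ((((b ^ 2)⁻¹ : ℝ)) : ℂ) * ⟪φ₀, M φ₀⟫ := by
      rw [map_inv₀, Complex.conj_ofReal]
      push_cast
      ring
    rw [e1, Complex.re_ofReal_mul, hm₀def]
    ring
  have hlamlb : lamMin Hop ≤ m₀ / b ^ 2 := by
    have := lamMin_le_aux Hop φ hφ1
    rwa [hφM] at this
  have hdivle : m₀ / b ^ 2 ≤ m₀ + ‖M‖ * t ^ 2 := by
    rw [div_le_iff₀ hb2pos]
    have e : b ^ 2 = 1 - t ^ 2 := by linarith only [hpyth]
    have hm₀' : m₀ ≤ ‖M‖ * (1 - t ^ 2) := by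
      rw [← e]; exact (abs_le.mp hm₀).2
    rw [e]
    nlinarith only [mul_nonneg (sq_nonneg t) (sub_nonneg.mpr hm₀')]
  -- main inequality (†)
  have hstar : α * Δ * t ^ 2 + m₀ - 2 * ‖M‖ * t - ‖M‖ * t ^ 2 ≤ lamMin Hop + δ := by
    have h1 : α * (Δ * t ^ 2) ≤ α * q := mul_le_mul_of_nonneg_left hq hα0.le
    have h2 := hlow
    rw [hEψ] at h2
    linarith only [h1, h2, (abs_le.mp hc).1, (abs_le.mp hw).1]
  have hdagger : α * Δ * t ^ 2 ≤ δ + 2 * ‖M‖ * t + 2 * ‖M‖ * t ^ 2 := by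
    linarith only [hstar, hlamlb, hdivle]
  -- closeness bound
  have ht6 : t ≤ 6 * ‖M‖ / (α * Δ) := by
    by_contra hcon
    push_neg at hcon
    have h1 : 6 * ‖M‖ < t * (α * Δ) := by
      rw [div_lt_iff₀ hαΔpos] at hcon; exact hcon
    have htpos : 0 < t := by nlinarith only [h1, hmM, hαΔpos]
    have h2 : 6 * ‖M‖ * t < α * Δ * t ^ 2 := by nlinarith only [mul_pos (sub_pos.mpr h1) htpos]
    have h3 : 2 * ‖M‖ * t < δ := by
      linarith only [hdagger, h2, mul_nonneg (mul_nonneg hmM.le ht0) (sub_nonneg.mpr ht1)]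
    have h4 : 12 * ‖M‖ ^ 2 < δ * (α * Δ) := by
      nlinarith only [mul_lt_mul_of_pos_right h3 hαΔpos, mul_lt_mul_of_pos_left h1 (by linarith only [hmM] : (0:ℝ) < 2 * ‖M‖)]
    linarith only [h4, hδαΔ, pow_pos hmM 2]
  refine ⟨φ, hφK, hφ1, ?_, ?_⟩
  · rw [hipn]
    have : (1 : ℝ) - b ^ 2 = t ^ 2 := by linarith only [hpyth]
    rw [this, Real.sqrt_sq ht0]
    exact ht6
  · rw [hφM]
    have ht6' : t * (α * Δ) ≤ 6 * ‖M‖ := by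
      rw [← le_div_iff₀ hαΔpos]; exact ht6
    have h2mt : 2 * ‖M‖ * t ≤ 12 * ‖M‖ ^ 2 / (α * Δ) := by
      rw [le_div_iff₀ hαΔpos]
      have h := mul_le_mul_of_nonneg_left ht6' (by positivity : (0:ℝ) ≤ 2 * ‖M‖)
      nlinarith only [h]
    have hkey : m₀ / b ^ 2 ≤ lamMin Hop + δ + 2 * ‖M‖ * t := by
      have : 2 * ‖M‖ * t ^ 2 ≤ α * Δ * t ^ 2 := by
        apply mul_le_mul_of_nonneg_right _ (sq_nonneg t)
        linarith only [hαΔ, hmM]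
      linarith only [hstar, hdivle, this]
    linarith only [hkey, h2mt]
end

section
/- Let ℋ be a finite-dimensional complex inner product space, A a positive semidefinite self-adjoint operator on ℋ, and B a positive semidefinite self-adjoint operator with nontrivial kernel such that ⟨x, B x⟩ ≥ Δ‖x‖² for every x orthogonal to ker B, where Δ > 0. Let P be an orthogonal projection on ℋ. Let ψ be a unit vector and η, c real numbers with 0 < η, η/Δ < 1, ⟨ψ, (A + B) ψ⟩ < η, and ⟨ψ, P ψ⟩ ≥ c. Let Π denote the orthogonal projection onto ker B. Then Π ψ ≠ 0; moreover, ‖ψ − Π ψ‖² < η/Δ, and the normalized kernel component γ₁ := Π ψ / ‖Π ψ‖ satisfies ⟨γ₁, P γ₁⟩ > c − 2√(η/Δ). -/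
open scoped ComplexInnerProductSpace

/-- A low-energy state (w.r.t. `A + B`, with `A, B ⪰ 0` and `B` having spectral gap `Δ`
above its kernel) with overlap at least `c` on a projector `P` has a nonzero component in
`ker B`; the component is `√(η/Δ)`-close to the state, and its normalization retains
overlap greater than `c − 2√(η/Δ)` with `P`. -/
theorem kernel_component_of_low_energy_state
    {ℋ : Type*} [NormedAddCommGroup ℋ] [InnerProductSpace ℂ ℋ] [FiniteDimensional ℂ ℋ]
    (A : ℋ →L[ℂ] ℋ) (hA : IsSelfAdjoint A) (hApos : ∀ x : ℋ, 0 ≤ (⟪x, A x⟫).re)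
    (B : ℋ →L[ℂ] ℋ) (hB : IsSelfAdjoint B) (hBpos : ∀ x : ℋ, 0 ≤ (⟪x, B x⟫).re)
    (hker : LinearMap.ker (B : ℋ →ₗ[ℂ] ℋ) ≠ ⊥)
    (Δ : ℝ) (hΔ : 0 < Δ)
    (hgap : ∀ x ∈ (LinearMap.ker (B : ℋ →ₗ[ℂ] ℋ))ᗮ, Δ * ‖x‖ ^ 2 ≤ (⟪x, B x⟫).re)
    (P : ℋ →L[ℂ] ℋ) (hPsa : IsSelfAdjoint P) (hPidem : P * P = P)
    (ψ : ℋ) (hψ : ‖ψ‖ = 1) (η c : ℝ) (hη : 0 < η) (hηΔ : η / Δ < 1)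
    (henergy : (⟪ψ, (A + B) ψ⟫).re < η)
    (hoverlap : c ≤ (⟪ψ, P ψ⟫).re) :
    ((Submodule.orthogonalProjectionOnto (LinearMap.ker (B : ℋ →ₗ[ℂ] ℋ)) ψ : ℋ) ≠ 0) ∧
    ‖ψ - (Submodule.orthogonalProjectionOnto (LinearMap.ker (B : ℋ →ₗ[ℂ] ℋ)) ψ : ℋ)‖ ^ 2 < η / Δ ∧
    c - 2 * Real.sqrt (η / Δ) <
      (⟪((‖(Submodule.orthogonalProjectionOnto (LinearMap.ker (B : ℋ →ₗ[ℂ] ℋ)) ψ : ℋ)‖⁻¹ : ℝ) : ℂ) •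
            (Submodule.orthogonalProjectionOnto (LinearMap.ker (B : ℋ →ₗ[ℂ] ℋ)) ψ : ℋ),
        P (((‖(Submodule.orthogonalProjectionOnto (LinearMap.ker (B : ℋ →ₗ[ℂ] ℋ)) ψ : ℋ)‖⁻¹ : ℝ) : ℂ) •
            (Submodule.orthogonalProjectionOnto (LinearMap.ker (B : ℋ →ₗ[ℂ] ℋ)) ψ : ℋ))⟫).re := by

  classical
  set K := LinearMap.ker (B : ℋ →ₗ[ℂ] ℋ) with hK
  set p : ℋ := (Submodule.orthogonalProjectionOnto K ψ : ℋ) with hp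
  set v : ℋ := ψ - p with hv
  have hpK : p ∈ K := (Submodule.orthogonalProjectionOnto K ψ).2
  have hvK : v ∈ Kᗮ := K.sub_starProjection_mem_orthogonal ψ
  have hBp : B p = 0 := hpK
  have hpv : ⟪p, v⟫ = 0 := hvK p hpK
  -- adjoint identity for self-adjoint operators
  have hadj : ∀ (T : ℋ →L[ℂ] ℋ), IsSelfAdjoint T → ∀ x y : ℋ, ⟪T x, y⟫ = ⟪x, T y⟫ := by
    intro T hT x y
    conv_lhs => rw [← hT.adjoint_eq]
    exact ContinuousLinearMap.adjoint_inner_left T y x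
  -- energy of B on ψ equals that on v
  have hBψv : ⟪ψ, B ψ⟫ = ⟪v, B v⟫ := by
    have hBv : B ψ = B v := by
      rw [hv, map_sub, hBp, sub_zero]
    rw [hBv]
    have : ψ = p + v := by rw [hv]; abel
    rw [this, inner_add_left]
    have h0 : ⟪p, B v⟫ = 0 := by
      rw [← hadj B hB, hBp, inner_zero_left]
    rw [h0, zero_add]
  -- ⟪ψ, B ψ⟫.re < η
  have hBlt : (⟪ψ, B ψ⟫).re < η := by
    have hsum : (⟪ψ, (A + B) ψ⟫).re = (⟪ψ, A ψ⟫).re + (⟪ψ, B ψ⟫).re := by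
      simp [ContinuousLinearMap.add_apply, inner_add_right]
    have := hApos ψ
    linarith [henergy, hsum ▸ henergy]
  have hgapv : Δ * ‖v‖ ^ 2 ≤ (⟪v, B v⟫).re := hgap v hvK
  -- main quantitative bound
  have hw2 : ‖v‖ ^ 2 < η / Δ := by
    have : Δ * ‖v‖ ^ 2 < η := by
      rw [hBψv] at hBlt; linarith
    exact (lt_div_iff₀ hΔ).mpr (by linarith)
  -- Pythagoras
  have hψpv : ψ = p + v := by rw [hv]; abel
  have hpyth : ‖p‖ ^ 2 + ‖v‖ ^ 2 = 1 := by
    have h := norm_add_sq (𝕜 := ℂ) p v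
    rw [← hψpv, hψ] at h
    simp [hpv] at h
    linarith
  have hvlt1 : ‖v‖ ^ 2 < 1 := lt_trans hw2 hηΔ
  have hpne : p ≠ 0 := by
    intro h0
    rw [h0] at hpyth
    simp at hpyth
    rcases hpyth with h | h <;> rw [h] at hvlt1 <;> norm_num at hvlt1
  have htpos : 0 < ‖p‖ := norm_pos_iff.mpr hpne
  -- projector facts
  have hPP : ∀ x : ℋ, P (P x) = P x := fun x => by
    rw [← ContinuousLinearMap.mul_apply, hPidem]
  have hPinner : ∀ x : ℋ, (⟪x, P x⟫).re = ‖P x‖ ^ 2 := by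
    intro x
    have : ⟪P x, P x⟫ = ⟪x, P x⟫ := by
      rw [hadj P hPsa, hPP]
    rw [← this]
    exact inner_self_eq_norm_sq (𝕜 := ℂ) (P x)
  have hPle : ∀ x : ℋ, ‖P x‖ ≤ ‖x‖ := by
    intro x
    have h1 : ‖P x‖ ^ 2 = (⟪x, P x⟫).re := (hPinner x).symm
    have h2 : (⟪x, P x⟫).re ≤ ‖x‖ * ‖P x‖ := by
      calc (⟪x, P x⟫).re ≤ ‖⟪x, P x⟫‖ := Complex.re_le_norm _
      _ ≤ ‖x‖ * ‖P x‖ := norm_inner_le_norm x (P x)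
    by_cases h : ‖P x‖ = 0
    · rw [h]; exact norm_nonneg x
    · have hpos : 0 < ‖P x‖ := lt_of_le_of_ne (norm_nonneg _) (Ne.symm h)
      nlinarith
  -- abbreviations
  set ε : ℝ := Real.sqrt (η / Δ) with hε
  have hηΔ0 : 0 ≤ η / Δ := le_of_lt (div_pos hη hΔ)
  have hε2 : ε ^ 2 = η / Δ := Real.sq_sqrt hηΔ0
  have hεpos : 0 < ε := Real.sqrt_pos.mpr (div_pos hη hΔ)
  have hε1 : ε < 1 := by
    calc ε < Real.sqrt 1 := Real.sqrt_lt_sqrt hηΔ0 hηΔ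
    _ = 1 := Real.sqrt_one
  have hwε : ‖v‖ < ε := by
    rw [hε]
    exact (Real.lt_sqrt (norm_nonneg v)).mpr hw2
  have hcs : c ≤ ‖P ψ‖ ^ 2 := by
    rw [← hPinner ψ]; exact hoverlap
  have hs1 : ‖P ψ‖ ≤ 1 := by rw [← hψ]; exact hPle ψ
  -- compute the final inner product
  have hfin : (⟪((‖p‖⁻¹ : ℝ) : ℂ) • p, P (((‖p‖⁻¹ : ℝ) : ℂ) • p)⟫).re
      = (‖p‖⁻¹) ^ 2 * ‖P p‖ ^ 2 := by
    rw [map_smul, inner_smul_left, inner_smul_right, Complex.conj_ofReal,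
      Complex.re_ofReal_mul, Complex.re_ofReal_mul, hPinner p]
    ring
  refine ⟨hpne, hw2, ?_⟩
  rw [hfin]
  have hsub : ‖P ψ‖ - ‖P v‖ ≤ ‖P p‖ := by
    have hPp : P p = P ψ - P v := by rw [hv, map_sub]; abel
    rw [hPp]; exact norm_sub_norm_le _ _
  have hPvle : ‖P v‖ ≤ ‖v‖ := hPle v
  have hPv0 : (0:ℝ) ≤ ‖P v‖ := norm_nonneg _
  have hs0 : (0:ℝ) ≤ ‖P ψ‖ := norm_nonneg _
  have hw0 : (0:ℝ) ≤ ‖v‖ := norm_nonneg _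
  have hr0 : (0:ℝ) ≤ ‖P p‖ := norm_nonneg _
  clear_value v p
  clear hadj hBψv hBlt hgapv hgap hoverlap henergy hApos hBpos hPinner hPle
    hPP hpv hBp hvK hpK hfin hψpv hv hp hψ hη hΔ hηΔ hw2 hε hε2 hηΔ0 hvlt1
    hpne
  have hple1 : ‖p‖ ≤ 1 := by nlinarith
  have hinv1 : 1 ≤ (‖p‖⁻¹) ^ 2 := by
    have h1 : 1 ≤ ‖p‖⁻¹ := by
      rw [le_inv_comm₀ one_pos htpos]
      simpa using hple1
    nlinarith
  have hPp0 : (0:ℝ) ≤ ‖P p‖ ^ 2 := sq_nonneg _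
  have hge : ‖P p‖ ^ 2 ≤ (‖p‖⁻¹) ^ 2 * ‖P p‖ ^ 2 := le_mul_of_one_le_left hPp0 hinv1
  rcases le_or_gt ‖v‖ ‖P ψ‖ with hcase | hcase
  · -- main case: ‖v‖ ≤ ‖P ψ‖
    have h1 : ‖P ψ‖ - ‖v‖ ≤ ‖P p‖ := by linarith
    have h0 : (0:ℝ) ≤ ‖P ψ‖ - ‖v‖ := by linarith
    have h2 : (‖P ψ‖ - ‖v‖) ^ 2 ≤ ‖P p‖ ^ 2 := pow_le_pow_left₀ h0 h1 2
    have e1 : (‖P ψ‖ - ‖v‖) ^ 2 = ‖P ψ‖ ^ 2 - 2 * (‖P ψ‖ * ‖v‖) + ‖v‖ ^ 2 := by ring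
    have e2 : ‖P ψ‖ * ‖v‖ ≤ ‖v‖ := mul_le_of_le_one_left hw0 hs1
    linarith [sq_nonneg ‖v‖]
  · -- degenerate case: ‖P ψ‖ < ‖v‖
    have h1 : ‖P ψ‖ ^ 2 < ‖v‖ ^ 2 := by
      have := pow_lt_pow_left₀ hcase hs0 two_ne_zero
      simpa using this
    have h2 : ‖v‖ ^ 2 < ε ^ 2 := by
      have := pow_lt_pow_left₀ hwε hw0 two_ne_zero
      simpa using this
    have h3 : 0 < ε * (2 - ε) := mul_pos hεpos (by linarith)
    have e3 : ε * (2 - ε) = 2 * ε - ε ^ 2 := by ring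
    have h4 : (0:ℝ) ≤ (‖p‖⁻¹) ^ 2 * ‖P p‖ ^ 2 := mul_nonneg (sq_nonneg _) hPp0
    linarith
end

section
/- Let R ⊆ {0,…,6} × {0,…,6} be the adjacency relation consisting exactly of the allowed pairs (left symbol, right symbol): (0,0), (0,1), (1,0), (1,1), (1,2), (2,2), (3,2), (3,3), (3,4), (4,4), (5,4), (5,5), (5,6), (6,5), (6,6). Let N ≥ 1 and let w : Fin N → Fin 7 be a string such that (w j, w (j+1)) ∈ R for every j with j + 1 < N. If there exists a position p with w p = 3, then there exists a natural number k with 1 ≤ k ≤ N such that w j = 3 for all j < k, and either w j = 2 for all j with k ≤ j < N, or w j = 4 for all j with k ≤ j < N. In particular, every symbol of w lies in {2, 3, 4}. -/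
/-- The allowed nearest-neighbour pairs `(left symbol, right symbol)` of the expanded
switch-register constraints (Figure: neighbour relations over the alphabet `{0,…,6}`). -/
def allowedPairs : Set (Fin 7 × Fin 7) :=
  {(0, 0), (0, 1), (1, 0), (1, 1), (1, 2), (2, 2), (3, 2), (3, 3), (3, 4), (4, 4),
    (5, 4), (5, 5), (5, 6), (6, 5), (6, 6)}

lemma ap_pred3 : ∀ a : Fin 7, (a, (3:Fin 7)) ∈ allowedPairs → a = 3 := by
  intro a h; fin_cases a <;> simp_all [allowedPairs, Prod.ext_iff]

lemma ap_succ3 : ∀ b : Fin 7, ((3:Fin 7), b) ∈ allowedPairs → b = 2 ∨ b = 3 ∨ b = 4 := by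
  intro b h; fin_cases b <;> simp_all [allowedPairs, Prod.ext_iff]

lemma ap_succ2 : ∀ b : Fin 7, ((2:Fin 7), b) ∈ allowedPairs → b = 2 := by
  intro b h; fin_cases b <;> simp_all [allowedPairs, Prod.ext_iff]

lemma ap_succ4 : ∀ b : Fin 7, ((4:Fin 7), b) ∈ allowedPairs → b = 4 := by
  intro b h; fin_cases b <;> simp_all [allowedPairs, Prod.ext_iff]

/-- Any string over `{0,…,6}` satisfying the nearest-neighbour constraints and containing
the symbol `3` has the form `3^k 2^{N−k}` or `3^k 4^{N−k}` for some `1 ≤ k ≤ N`;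
in particular all its symbols lie in `{2, 3, 4}`. -/
theorem switch_string_regular_structure (N : ℕ) (hN : 1 ≤ N) (w : Fin N → Fin 7)
    (hadj : ∀ j : Fin N, ∀ h : (j : ℕ) + 1 < N, (w j, w ⟨(j : ℕ) + 1, h⟩) ∈ allowedPairs)
    (hthree : ∃ p : Fin N, w p = 3) :
    (∃ k : ℕ, 1 ≤ k ∧ k ≤ N ∧
      (∀ j : Fin N, (j : ℕ) < k → w j = 3) ∧
      ((∀ j : Fin N, k ≤ (j : ℕ) → w j = 2) ∨ (∀ j : Fin N, k ≤ (j : ℕ) → w j = 4))) ∧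
    (∀ j : Fin N, w j = 2 ∨ w j = 3 ∨ w j = 4) := by
  obtain ⟨p, hp⟩ := hthree
  -- adjacency in terms of natural-number indices
  have adj : ∀ m : ℕ, ∀ hm : m + 1 < N,
      (w ⟨m, by omega⟩, w ⟨m + 1, hm⟩) ∈ allowedPairs := by
    intro m hm
    exact hadj ⟨m, by omega⟩ hm
  -- backwards: everything before a 3 is a 3
  have back : ∀ m : ℕ, ∀ hm : m < N, w ⟨m, hm⟩ = 3 →
      ∀ l : ℕ, ∀ hl : l ≤ m, w ⟨l, by omega⟩ = 3 := by
    intro m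
    induction m with
    | zero => intro hm h l hl; interval_cases l; exact h
    | succ n ih =>
      intro hm h l hl
      have hn : w ⟨n, by omega⟩ = 3 := by
        have := adj n hm
        rw [h] at this
        exact ap_pred3 _ this
      rcases Nat.lt_or_ge l (n+1) with hlt | hge
      · exact ih (by omega) hn l (by omega)
      · have : l = n + 1 := by omega
        subst this; exact h
  -- forwards from a 2
  have fwd2 : ∀ m : ℕ, ∀ hm : m < N, w ⟨m, hm⟩ = 2 →
      ∀ d : ℕ, ∀ hd : m + d < N, w ⟨m + d, hd⟩ = 2 := by
    intro m hm h d
    induction d with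
    | zero => intro _; exact h
    | succ n ih =>
      intro hd
      have h1 := ih (by omega)
      have := adj (m + n) (by omega)
      rw [h1] at this
      exact ap_succ2 _ this
  have fwd4 : ∀ m : ℕ, ∀ hm : m < N, w ⟨m, hm⟩ = 4 →
      ∀ d : ℕ, ∀ hd : m + d < N, w ⟨m + d, hd⟩ = 4 := by
    intro m hm h d
    induction d with
    | zero => intro _; exact h
    | succ n ih =>
      intro hd
      have h1 := ih (by omega)
      have := adj (m + n) (by omega)
      rw [h1] at this
      exact ap_succ4 _ this
  have hp' : w ⟨(p : ℕ), p.isLt⟩ = 3 := by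
    have : (⟨(p : ℕ), p.isLt⟩ : Fin N) = p := rfl
    rw [this]; exact hp
  by_cases hall : ∀ m : ℕ, ∀ hm : m < N, w ⟨m, hm⟩ = 3
  · refine ⟨⟨N, hN, le_refl N, ?_, Or.inl ?_⟩, ?_⟩
    · intro j _; have := hall j j.isLt; simpa using this
    · intro j hj; exact absurd j.isLt (by omega)
    · intro j; right; left; have := hall j j.isLt; simpa using this
  · push_neg at hall
    obtain ⟨m0, hm0, hm0ne⟩ := hall
    have hex : ∃ m : ℕ, ∃ hm : m < N, w ⟨m, hm⟩ ≠ 3 := ⟨m0, hm0, hm0ne⟩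
    classical
    set k := Nat.find hex with hk
    obtain ⟨hkN, hkne⟩ := Nat.find_spec hex
    have hlt3 : ∀ l : ℕ, ∀ hl : l < N, l < k → w ⟨l, hl⟩ = 3 := by
      intro l hl hlk
      by_contra hc
      exact Nat.find_min hex hlk ⟨hl, hc⟩
    have hk1 : 1 ≤ k := by
      rcases Nat.eq_zero_or_pos k with h0 | h
      · exfalso
        apply hkne
        have h3 := back p p.isLt hp' 0 (Nat.zero_le _)
        have hfe : (⟨Nat.find hex, hkN⟩ : Fin N) = ⟨0, by omega⟩ := by
          apply Fin.ext; simp only [Fin.val_mk]; rw [← hk]; exact h0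
        rw [hfe]; exact h3
      · exact h
    -- w at k is 2 or 4
    have hprev : w ⟨k - 1, by omega⟩ = 3 := hlt3 (k - 1) (by omega) (by omega)
    have hadjk := adj (k - 1) (by omega)
    rw [hprev] at hadjk
    have hk' : (⟨k - 1 + 1, by omega⟩ : Fin N) = ⟨k, hkN⟩ := by
      apply Fin.ext; simp; omega
    rw [hk'] at hadjk
    have hwk : w ⟨k, hkN⟩ = 2 ∨ w ⟨k, hkN⟩ = 4 := by
      rcases ap_succ3 _ hadjk with h | h | h
      · exact Or.inl h
      · exact absurd h hkne
      · exact Or.inr h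
    have hjlt : ∀ j : Fin N, (j : ℕ) < k → w j = 3 := by
      intro j hj
      have := hlt3 j j.isLt hj
      simpa using this
    rcases hwk with h2 | h4
    · refine ⟨⟨k, hk1, by omega, hjlt, Or.inl ?_⟩, ?_⟩
      · intro j hj
        have := fwd2 k hkN h2 ((j : ℕ) - k) (by omega)
        have hje : (⟨k + ((j:ℕ) - k), by omega⟩ : Fin N) = j := by
          apply Fin.ext; simp; omega
        rwa [hje] at this
      · intro j
        rcases Nat.lt_or_ge (j : ℕ) k with hj | hj
        · right; left; exact hjlt j hj
        · left
          have := fwd2 k hkN h2 ((j : ℕ) - k) (by omega)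
          have hje : (⟨k + ((j:ℕ) - k), by omega⟩ : Fin N) = j := by
            apply Fin.ext; simp; omega
          rwa [hje] at this
    · refine ⟨⟨k, hk1, by omega, hjlt, Or.inr ?_⟩, ?_⟩
      · intro j hj
        have := fwd4 k hkN h4 ((j : ℕ) - k) (by omega)
        have hje : (⟨k + ((j:ℕ) - k), by omega⟩ : Fin N) = j := by
          apply Fin.ext; simp; omega
        rwa [hje] at this
      · intro j
        rcases Nat.lt_or_ge (j : ℕ) k with hj | hj
        · right; left; exact hjlt j hj
        · right; right
          have := fwd4 k hkN h4 ((j : ℕ) - k) (by omega)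
          have hje : (⟨k + ((j:ℕ) - k), by omega⟩ : Fin N) = j := by
            apply Fin.ext; simp; omega
          rwa [hje] at this
end

section
/- (b-orthogonality of the switch subspaces) Let N, b be natural numbers, let D be a set of b + 1 coordinates in Fin N, and let s ⊆ Fin N be a set of at most b coordinates. Let U be a complex matrix indexed by functions Fin N → Fin 7 such that U(f, g) = 0 whenever there exists a coordinate j ∉ s with f j ≠ g j (in particular this holds for any unitary acting only on the qudits in s). Let v, w : (Fin N → Fin 7) → ℂ be vectors such that v(g) = 0 unless g j ∈ {0, 1, 2} for every j ∈ D, and w(f) = 0 unless f j ∈ {4, 5, 6} for every j ∈ D. Then ⟨w, U v⟩ = 0, i.e. ∑_{f, g} conj(w f) · U(f, g) · v(g) = 0. -/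
open Finset

/-- b-orthogonality of the switch subspaces: if `v` is supported on basis states whose
symbols on the `b+1` coordinates of `D` lie in `{0,1,2}`, `w` is supported on basis states
whose symbols on `D` lie in `{4,5,6}`, and the matrix `U` acts only on the (at most `b`)
qudits in `s`, then `⟨w, U v⟩ = 0`. -/
theorem switch_subspaces_b_orthogonal (N b : ℕ)
    (D : Finset (Fin N)) (hD : D.card = b + 1)
    (s : Finset (Fin N)) (hs : s.card ≤ b)
    (U : (Fin N → Fin 7) → (Fin N → Fin 7) → ℂ)
    (hU : ∀ f g : Fin N → Fin 7, (∃ j ∉ s, f j ≠ g j) → U f g = 0)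
    (v w : (Fin N → Fin 7) → ℂ)
    (hv : ∀ g : Fin N → Fin 7, ¬ (∀ j ∈ D, g j ∈ ({0, 1, 2} : Set (Fin 7))) → v g = 0)
    (hw : ∀ f : Fin N → Fin 7, ¬ (∀ j ∈ D, f j ∈ ({4, 5, 6} : Set (Fin 7))) → w f = 0) :
    ∑ f : Fin N → Fin 7, ∑ g : Fin N → Fin 7, (starRingEnd ℂ) (w f) * U f g * v g = 0 := by
  apply Finset.sum_eq_zero
  intro f _
  apply Finset.sum_eq_zero
  intro g _
  by_cases hwf : ∀ j ∈ D, f j ∈ ({4, 5, 6} : Set (Fin 7))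
  · by_cases hvg : ∀ j ∈ D, g j ∈ ({0, 1, 2} : Set (Fin 7))
    · -- find j ∈ D \ s
      have hcard : (D \ s).Nonempty := by
        rw [← Finset.card_pos]
        have := Finset.le_card_sdiff s D
        omega
      obtain ⟨j, hj⟩ := hcard
      rw [Finset.mem_sdiff] at hj
      have hne : f j ≠ g j := by
        have h1 := hwf j hj.1
        have h2 := hvg j hj.1
        simp only [Set.mem_insert_iff, Set.mem_singleton_iff] at h1 h2
        rcases h1 with h | h | h <;> rcases h2 with h' | h' | h' <;>
          simp [h, h'] <;> decide
      rw [hU f g ⟨j, hj.2, hne⟩]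
      ring
    · rw [hv g hvg]; ring
  · rw [hw f hwf]
    simp
end

section
/- Let ℋ be a finite-dimensional complex inner product space, H₁ a self-adjoint operator with operator norm ‖H₁‖, and B a positive semidefinite self-adjoint operator with nontrivial kernel such that ⟨x, B x⟩ ≥ Δ‖x‖² for every x orthogonal to ker B, where Δ > 2‖H₁‖. Let γ₁ ∈ ker B and γ₂ ⊥ ker B be unit vectors, let a, b ∈ ℂ with |a|² + |b|² = 1 and |b|² ≤ η/Δ for some real η ≥ 0 with η/Δ ≤ 1, and set ψ := a·γ₁ + b·γ₂. Then ⟨ψ, (H₁ + B) ψ⟩ ≥ ⟨γ₁, H₁ γ₁⟩ − 2‖H₁‖·√(η/Δ). -/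
open scoped ComplexInnerProductSpace

private lemma aux_energy {ℋ : Type*} [NormedAddCommGroup ℋ] [InnerProductSpace ℂ ℋ]
    [FiniteDimensional ℂ ℋ]
    (H : ℋ →L[ℂ] ℋ) (hH : IsSelfAdjoint H) (ψ u : ℋ)
    (hψ : ‖ψ‖ ^ 2 = 1) (hu : ‖u‖ = 1) (r s : ℝ)
    (hr : ⟪ψ, u⟫ = (r : ℂ)) (hs : 0 ≤ s) (hrs : r ^ 2 + s ^ 2 = 1) :
    (⟪u, H u⟫).re - 2 * ‖H‖ * s ≤ (⟪ψ, H ψ⟫).re := by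
  have hsym : ∀ x y : ℋ, (⟪x, H y⟫ : ℂ) = (starRingEnd ℂ) ⟪y, H x⟫ := by
    intro x y
    have h0 : (⟪H y, x⟫ : ℂ) = ⟪y, H x⟫ := hH.isSymmetric y x
    rw [← h0, inner_conj_symm]
  have hkey : (⟪ψ, H ψ⟫).re - (⟪u, H u⟫).re = (⟪ψ - u, H (ψ + u)⟫).re := by
    rw [map_add, inner_sub_left, inner_add_right, inner_add_right]
    have hid : ⟪ψ, H ψ⟫ + ⟪ψ, H u⟫ - (⟪u, H ψ⟫ + ⟪u, H u⟫)
        = (⟪ψ, H ψ⟫ - ⟪u, H u⟫) + (⟪ψ, H u⟫ - ⟪u, H ψ⟫) := by ring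
    rw [hid, Complex.add_re, Complex.sub_re (⟪ψ, H u⟫), hsym ψ u]
    rw [Complex.conj_re]
    simp [Complex.sub_re]
  have husq : ‖u‖ ^ 2 = 1 := by rw [hu]; norm_num
  have hsub : ‖ψ - u‖ ^ 2 = 2 - 2 * r := by
    rw [@norm_sub_sq ℂ, hψ, husq, hr]
    simp [Complex.ofReal_re]; ring
  have hadd : ‖ψ + u‖ ^ 2 = 2 + 2 * r := by
    rw [@norm_add_sq ℂ, hψ, husq, hr]
    simp [Complex.ofReal_re]; ring
  have hprod : ‖ψ - u‖ * ‖ψ + u‖ = 2 * s := by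
    have h1 : (‖ψ - u‖ * ‖ψ + u‖) ^ 2 = (2 * s) ^ 2 := by
      rw [mul_pow, hsub, hadd]; nlinarith
    have h2 : 0 ≤ ‖ψ - u‖ * ‖ψ + u‖ := by positivity
    have h3 : (0 : ℝ) ≤ 2 * s := by positivity
    nlinarith
  have hbound : -(2 * ‖H‖ * s) ≤ (⟪ψ - u, H (ψ + u)⟫).re := by
    have h1 : |(⟪ψ - u, H (ψ + u)⟫).re| ≤ ‖(⟪ψ - u, H (ψ + u)⟫ : ℂ)‖ :=
      Complex.abs_re_le_norm _
    have h2 : ‖(⟪ψ - u, H (ψ + u)⟫ : ℂ)‖ ≤ ‖ψ - u‖ * ‖H (ψ + u)‖ :=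
      norm_inner_le_norm _ _
    have h3 : ‖H (ψ + u)‖ ≤ ‖H‖ * ‖ψ + u‖ := H.le_opNorm _
    have h4 : ‖ψ - u‖ * ‖H (ψ + u)‖ ≤ ‖ψ - u‖ * (‖H‖ * ‖ψ + u‖) :=
      mul_le_mul_of_nonneg_left h3 (norm_nonneg _)
    have h5 : ‖ψ - u‖ * (‖H‖ * ‖ψ + u‖) = 2 * ‖H‖ * s := by
      rw [mul_comm ‖H‖ _, ← mul_assoc, hprod]; ring
    have h6 : |(⟪ψ - u, H (ψ + u)⟫).re| ≤ 2 * ‖H‖ * s := by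
      calc |(⟪ψ - u, H (ψ + u)⟫).re| ≤ ‖ψ - u‖ * ‖H (ψ + u)‖ := h1.trans h2
        _ ≤ 2 * ‖H‖ * s := h4.trans_eq h5
    linarith [neg_abs_le (⟪ψ - u, H (ψ + u)⟫).re]
  linarith [hkey, hbound]

/-- Energy lower bound on a superposition `ψ = a·γ₁ + b·γ₂` with small weight outside the
kernel of `B`: `⟨ψ, (H₁ + B) ψ⟩ ≥ ⟨γ₁, H₁ γ₁⟩ − 2‖H₁‖·√(η/Δ)`. -/
theorem energy_lower_bound_superposition
    {ℋ : Type*} [NormedAddCommGroup ℋ] [InnerProductSpace ℂ ℋ] [FiniteDimensional ℂ ℋ]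
    (H₁ : ℋ →L[ℂ] ℋ) (hH₁ : IsSelfAdjoint H₁)
    (B : ℋ →L[ℂ] ℋ) (hB : IsSelfAdjoint B) (hBpos : ∀ x : ℋ, 0 ≤ (⟪x, B x⟫).re)
    (hker : LinearMap.ker (B : ℋ →ₗ[ℂ] ℋ) ≠ ⊥)
    (Δ : ℝ) (hgap : ∀ x ∈ (LinearMap.ker (B : ℋ →ₗ[ℂ] ℋ))ᗮ, Δ * ‖x‖ ^ 2 ≤ (⟪x, B x⟫).re)
    (hΔ : 2 * ‖H₁‖ < Δ)
    (γ₁ γ₂ : ℋ) (hγ₁ : γ₁ ∈ LinearMap.ker (B : ℋ →ₗ[ℂ] ℋ)) (hγ₂ : γ₂ ∈ (LinearMap.ker (B : ℋ →ₗ[ℂ] ℋ))ᗮ)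
    (hγ₁n : ‖γ₁‖ = 1) (hγ₂n : ‖γ₂‖ = 1)
    (a b : ℂ) (hab : ‖a‖ ^ 2 + ‖b‖ ^ 2 = 1)
    (η : ℝ) (hη : 0 ≤ η) (hηΔ : η / Δ ≤ 1) (hb : ‖b‖ ^ 2 ≤ η / Δ) :
    (⟪γ₁, H₁ γ₁⟫).re - 2 * ‖H₁‖ * Real.sqrt (η / Δ) ≤
      (⟪a • γ₁ + b • γ₂, (H₁ + B) (a • γ₁ + b • γ₂)⟫).re := by
  have hort : ⟪γ₁, γ₂⟫ = 0 := hγ₂ γ₁ hγ₁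
  have hort' : ⟪γ₂, γ₁⟫ = 0 := by rw [← inner_conj_symm, hort, map_zero]
  have hγ₁sq : ⟪γ₁, γ₁⟫ = 1 := by
    rw [inner_self_eq_norm_sq_to_K, hγ₁n]; norm_num
  set p : ℂ := if a = 0 then 1 else a / ‖a‖ with hpdef
  have hpnorm : ‖p‖ = 1 := by
    by_cases h : a = 0
    · simp [hpdef, h]
    · simp [hpdef, h, norm_div, div_self (norm_ne_zero_iff.mpr h)]
  have hpa : p * (starRingEnd ℂ) a = (‖a‖ : ℂ) := by
    by_cases h : a = 0
    · simp [hpdef, h]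
    · rw [hpdef, if_neg h, div_mul_eq_mul_div, Complex.mul_conj,
        Complex.normSq_eq_norm_sq]
      have hne : (‖a‖ : ℂ) ≠ 0 := by
        simpa using norm_ne_zero_iff.mpr h
      rw [div_eq_iff hne, sq]
      push_cast
      ring
  have hψu : ⟪a • γ₁ + b • γ₂, p • γ₁⟫ = ((‖a‖ : ℝ) : ℂ) := by
    rw [inner_add_left, inner_smul_left, inner_smul_left,
      inner_smul_right, inner_smul_right, hγ₁sq, hort', mul_zero, mul_zero,
      add_zero, mul_one, mul_comm]
    exact hpa
  have hψnorm : ‖a • γ₁ + b • γ₂‖ ^ 2 = 1 := by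
    rw [@norm_add_sq ℂ, inner_smul_left, inner_smul_right, hort,
      mul_zero, mul_zero, map_zero, norm_smul, norm_smul, hγ₁n, hγ₂n,
      mul_one, mul_one, mul_zero, add_zero]
    exact hab
  have hunorm : ‖p • γ₁‖ = 1 := by rw [norm_smul, hpnorm, hγ₁n, one_mul]
  have hp1 : (starRingEnd ℂ) p * p = 1 := by
    rw [mul_comm, Complex.mul_conj, Complex.normSq_eq_norm_sq,
      hpnorm]
    norm_num
  have huu : (⟪p • γ₁, H₁ (p • γ₁)⟫ : ℂ) = ⟪γ₁, H₁ γ₁⟫ := by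
    rw [map_smul, inner_smul_left, inner_smul_right, ← mul_assoc, hp1, one_mul]
  have hmain := aux_energy H₁ hH₁ (a • γ₁ + b • γ₂) (p • γ₁) hψnorm hunorm
    ‖a‖ ‖b‖ hψu (norm_nonneg b) hab
  rw [huu] at hmain
  have hBψ : 0 ≤ (⟪a • γ₁ + b • γ₂, B (a • γ₁ + b • γ₂)⟫).re := hBpos _
  have hsplit : (⟪a • γ₁ + b • γ₂, (H₁ + B) (a • γ₁ + b • γ₂)⟫).re
      = (⟪a • γ₁ + b • γ₂, H₁ (a • γ₁ + b • γ₂)⟫).re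
        + (⟪a • γ₁ + b • γ₂, B (a • γ₁ + b • γ₂)⟫).re := by
    rw [ContinuousLinearMap.add_apply, inner_add_right, Complex.add_re]
  have hbsqrt : ‖b‖ ≤ Real.sqrt (η / Δ) := by
    have h := Real.sqrt_le_sqrt hb
    rwa [Real.sqrt_sq (norm_nonneg b)] at h
  have hfinal : 2 * ‖H₁‖ * ‖b‖ ≤ 2 * ‖H₁‖ * Real.sqrt (η / Δ) := by
    apply mul_le_mul_of_nonneg_left hbsqrt
    positivity
  rw [hsplit]
  linarith
end
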